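/- arXiv:1005.2248 — 4 statements merged into one kernel-verified Lean document; each statement's English description precedes it below -/
import Mathlib

section
/- The complete graph K₅ has exactly six proper 5-edge-colourings up to permutation of the colours, and no proper 5-edge-colouring of K₅ admits a nontrivial Kempe change; consequently the number of Kempe equivalence classes of proper 5-edge-colourings of K₅ is exactly 6, i.e. κ_E(K₅, 5) = 6. -/
open SimpleGraph

/-- A proper `k`-edge-colouring of `G`: distinct edges sharing a vertex receive
different colours. -/
def IsProperEdgeColoring {V : Type*} (G : SimpleGraph V) (k : ℕ)
    (φ : G.edgeSet → Fin k) : Prop :=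
  ∀ e₁ e₂ : G.edgeSet, e₁ ≠ e₂ →
    (∃ v : V, v ∈ (e₁ : Sym2 V) ∧ v ∈ (e₂ : Sym2 V)) → φ e₁ ≠ φ e₂

/-- The spanning subgraph of `G` consisting of the edges coloured `a` or `b` under `φ`. -/
def kempeGraph {V : Type*} (G : SimpleGraph V) {k : ℕ} (φ : G.edgeSet → Fin k)
    (a b : Fin k) : SimpleGraph V where
  Adj u v := ∃ h : G.Adj u v, φ ⟨s(u, v), h⟩ = a ∨ φ ⟨s(u, v), h⟩ = b
  symm := by
    constructor
    rintro u v ⟨h, hc⟩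
    refine ⟨h.symm, ?_⟩
    have he : (⟨s(v, u), h.symm⟩ : G.edgeSet) = ⟨s(u, v), h⟩ :=
      Subtype.ext (Sym2.eq_swap)
    rw [he]
    exact hc
  loopless := by
    constructor
    rintro v ⟨h, _⟩
    exact G.loopless.irrefl v h

/-- The edge `e` lies in the Kempe chain determined by the colours `a, b` and the
connected component of the vertex `w` in the `(a,b)`-subgraph. -/
def InKempeChain {V : Type*} (G : SimpleGraph V) {k : ℕ} (φ : G.edgeSet → Fin k)
    (a b : Fin k) (w : V) (e : G.edgeSet) : Prop :=
  (φ e = a ∨ φ e = b) ∧ ∃ u ∈ (e : Sym2 V), (kempeGraph G φ a b).Reachable w u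

/-- `ψ` is obtained from `φ` by a single Kempe change: the colours `a` and `b` are
swapped on one connected component of the subgraph induced by the edges coloured
`a` or `b`, and all other edges keep their colour. -/
def KempeChange {V : Type*} (G : SimpleGraph V) (k : ℕ)
    (φ ψ : G.edgeSet → Fin k) : Prop :=
  ∃ (a b : Fin k) (w : V), ∀ e : G.edgeSet,
    (InKempeChain G φ a b w e → ψ e = Equiv.swap a b (φ e)) ∧
    (¬ InKempeChain G φ a b w e → ψ e = φ e)

/-- Kempe equivalence: `ψ` is obtained from `φ` by a finite sequence of Kempe changes. -/
def KempeEquiv {V : Type*} (G : SimpleGraph V) (k : ℕ)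
    (φ ψ : G.edgeSet → Fin k) : Prop :=
  Relation.ReflTransGen (KempeChange G k) φ ψ

/-- Two edge-colourings differ only by a permutation of the colour set. -/
def PermRelated {V : Type*} (G : SimpleGraph V) (k : ℕ)
    (φ ψ : G.edgeSet → Fin k) : Prop :=
  ∃ σ : Equiv.Perm (Fin k), ∀ e : G.edgeSet, ψ e = σ (φ e)

/-- Kempe equivalence with colourings differing by a permutation of colours identified. -/
def KempePermEquiv {V : Type*} (G : SimpleGraph V) (k : ℕ)
    (φ ψ : G.edgeSet → Fin k) : Prop :=
  ∃ ψ' : G.edgeSet → Fin k, PermRelated G k ψ ψ' ∧ KempeEquiv G k φ ψ'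

abbrev K5 : SimpleGraph (Fin 5) := completeGraph (Fin 5)

instance : DecidableRel K5.Adj := fun a b => inferInstanceAs (Decidable (a ≠ b))

def E : Fin 10 → Sym2 (Fin 5) :=
  ![s(0,1), s(0,2), s(0,3), s(0,4), s(1,2), s(1,3), s(1,4), s(2,3), s(2,4), s(3,4)]

lemma hE : ∀ i, E i ∈ K5.edgeSet := by decide

def Es (i : Fin 10) : K5.edgeSet := ⟨E i, hE i⟩

def eidx (x : K5.edgeSet) : Fin 10 :=
  if (x : Sym2 (Fin 5)) = s(0,1) then 0 else
  if (x : Sym2 (Fin 5)) = s(0,2) then 1 else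
  if (x : Sym2 (Fin 5)) = s(0,3) then 2 else
  if (x : Sym2 (Fin 5)) = s(0,4) then 3 else
  if (x : Sym2 (Fin 5)) = s(1,2) then 4 else
  if (x : Sym2 (Fin 5)) = s(1,3) then 5 else
  if (x : Sym2 (Fin 5)) = s(1,4) then 6 else
  if (x : Sym2 (Fin 5)) = s(2,3) then 7 else
  if (x : Sym2 (Fin 5)) = s(2,4) then 8 else
  9

lemma Es_eidx : ∀ x, Es (eidx x) = x := by decide
lemma eidx_Es : ∀ i, eidx (Es i) = i := by decide

lemma Es_inj : Function.Injective Es := by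
  intro i j h
  have := congrArg eidx h
  rwa [eidx_Es, eidx_Es] at this

def C : Fin 6 → Fin 10 → Fin 5 :=
  ![![0,1,2,3,2,3,4,4,0,1],
    ![0,1,2,3,2,4,1,3,4,0],
    ![0,1,2,3,3,1,4,4,2,0],
    ![0,1,2,3,3,4,2,0,4,1],
    ![0,1,2,3,4,1,2,3,0,4],
    ![0,1,2,3,4,3,1,0,2,4]]

/-- canonical colourings -/
def φs (t : Fin 6) : K5.edgeSet → Fin 5 := fun e => C t (eidx e)

abbrev PIdx (f : Fin 10 → Fin 5) : Prop :=
  ∀ i j : Fin 10, i ≠ j → (∃ v, v ∈ E i ∧ v ∈ E j) → f i ≠ f j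

lemma pidx_of_proper {ψ : K5.edgeSet → Fin 5} (h : IsProperEdgeColoring K5 5 ψ) :
    PIdx (fun i => ψ (Es i)) := by
  intro i j hij hsh
  exact h (Es i) (Es j) (fun he => hij (Es_inj he)) hsh

lemma proper_of_pidx {ψ : K5.edgeSet → Fin 5} (h : PIdx (fun i => ψ (Es i))) :
    IsProperEdgeColoring K5 5 ψ := by
  intro e₁ e₂ hne hsh
  have h1 := Es_eidx e₁
  have h2 := Es_eidx e₂
  have hE1 : E (eidx e₁) = (e₁ : Sym2 (Fin 5)) := congrArg Subtype.val h1
  have hE2 : E (eidx e₂) = (e₂ : Sym2 (Fin 5)) := congrArg Subtype.val h2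
  have := h (eidx e₁) (eidx e₂) (fun hh => hne (by rw [← h1, ← h2, hh]))
    (by rw [hE1, hE2]; exact hsh)
  simpa only [h1, h2] using this

lemma pidx_C : ∀ t, PIdx (C t) := by decide

lemma phis_Es (t : Fin 6) (i : Fin 10) : φs t (Es i) = C t i := by
  rw [φs, eidx_Es]

lemma proper_phis (t : Fin 6) : IsProperEdgeColoring K5 5 (φs t) := by
  apply proper_of_pidx
  have : (fun i => φs t (Es i)) = C t := funext fun i => phis_Es t i
  rw [this]; exact pidx_C t

/-! ### Enumeration of normalized proper colourings -/

set_option maxRecDepth 4000 in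
set_option synthInstance.maxSize 2000 in
set_option synthInstance.maxHeartbeats 1000000 in
set_option maxHeartbeats 2000000 in
lemma enum : ∀ d4 d5 d6 d7 d8 d9 : Fin 5,
    (d4 ≠ 0 ∧ d4 ≠ 1 ∧
    d5 ≠ 0 ∧ d5 ≠ 2 ∧ d5 ≠ d4 ∧
    d6 ≠ 0 ∧ d6 ≠ 3 ∧ d6 ≠ d4 ∧ d6 ≠ d5 ∧
    d7 ≠ 1 ∧ d7 ≠ 2 ∧ d7 ≠ d4 ∧ d7 ≠ d5 ∧
    d8 ≠ 1 ∧ d8 ≠ 3 ∧ d8 ≠ d4 ∧ d8 ≠ d6 ∧ d8 ≠ d7 ∧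
    d9 ≠ 2 ∧ d9 ≠ 3 ∧ d9 ≠ d5 ∧ d9 ≠ d6 ∧ d9 ≠ d7 ∧ d9 ≠ d8) →
    ∃ t, ![0,1,2,3,d4,d5,d6,d7,d8,d9] = C t := by decide

set_option maxRecDepth 4000 in
lemma perm4 : ∀ a b c d : Fin 5, a ≠ b → a ≠ c → a ≠ d → b ≠ c → b ≠ d → c ≠ d →
    ∃ σ : Equiv.Perm (Fin 5), σ a = 0 ∧ σ b = 1 ∧ σ c = 2 ∧ σ d = 3 := by decide

/-- every proper colouring is a colour-permutation of one of the six canonical ones -/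
lemma classify (ψ : K5.edgeSet → Fin 5) (hψ : IsProperEdgeColoring K5 5 ψ) :
    ∃ (t : Fin 6) (σ : Equiv.Perm (Fin 5)), ∀ e, ψ e = σ (φs t e) := by
  have hP : PIdx (fun i => ψ (Es i)) := pidx_of_proper hψ
  set f : Fin 10 → Fin 5 := fun i => ψ (Es i) with hf
  obtain ⟨σ, hσ0, hσ1, hσ2, hσ3⟩ := perm4 (f 0) (f 1) (f 2) (f 3)
    (hP 0 1 (by decide) (by decide)) (hP 0 2 (by decide) (by decide))
    (hP 0 3 (by decide) (by decide)) (hP 1 2 (by decide) (by decide))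
    (hP 1 3 (by decide) (by decide)) (hP 2 3 (by decide) (by decide))
  set h : Fin 10 → Fin 5 := fun i => σ (f i) with hh
  have hPh : PIdx h := fun i j hij hsh heq => hP i j hij hsh (σ.injective heq)
  have hh0 : h 0 = 0 := hσ0
  have hh1 : h 1 = 1 := hσ1
  have hh2 : h 2 = 2 := hσ2
  have hh3 : h 3 = 3 := hσ3
  obtain ⟨t, ht⟩ := enum (h 4) (h 5) (h 6) (h 7) (h 8) (h 9)
    ⟨fun q => hPh 4 0 (by decide) (by decide) (q.trans hh0.symm),
     fun q => hPh 4 1 (by decide) (by decide) (q.trans hh1.symm),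
     fun q => hPh 5 0 (by decide) (by decide) (q.trans hh0.symm),
     fun q => hPh 5 2 (by decide) (by decide) (q.trans hh2.symm),
     hPh 5 4 (by decide) (by decide),
     fun q => hPh 6 0 (by decide) (by decide) (q.trans hh0.symm),
     fun q => hPh 6 3 (by decide) (by decide) (q.trans hh3.symm),
     hPh 6 4 (by decide) (by decide),
     hPh 6 5 (by decide) (by decide),
     fun q => hPh 7 1 (by decide) (by decide) (q.trans hh1.symm),
     fun q => hPh 7 2 (by decide) (by decide) (q.trans hh2.symm),
     hPh 7 4 (by decide) (by decide),
     hPh 7 5 (by decide) (by decide),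
     fun q => hPh 8 1 (by decide) (by decide) (q.trans hh1.symm),
     fun q => hPh 8 3 (by decide) (by decide) (q.trans hh3.symm),
     hPh 8 4 (by decide) (by decide),
     hPh 8 6 (by decide) (by decide),
     hPh 8 7 (by decide) (by decide),
     fun q => hPh 9 2 (by decide) (by decide) (q.trans hh2.symm),
     fun q => hPh 9 3 (by decide) (by decide) (q.trans hh3.symm),
     hPh 9 5 (by decide) (by decide),
     hPh 9 6 (by decide) (by decide),
     hPh 9 7 (by decide) (by decide),
     hPh 9 8 (by decide) (by decide)⟩
  have h10 : ∀ i : Fin 10, h i = C t i := by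
    intro i
    rw [← ht]
    fin_cases i <;> first | rfl | simp [hh0, hh1, hh2, hh3]
  refine ⟨t, σ.symm, fun e => ?_⟩
  have e1 : ψ e = f (eidx e) := (congrArg ψ (Es_eidx e)).symm
  have e2 : σ (f (eidx e)) = C t (eidx e) := h10 (eidx e)
  rw [e1, ← σ.symm_apply_apply (f (eidx e)), e2]
  rfl

/-! ### Reachability in Kempe graphs of the canonical colourings -/

def pidx : Fin 5 → Fin 5 → Fin 10 :=
  ![![0,0,1,2,3],![0,0,4,5,6],![1,4,0,7,8],![2,5,7,0,9],![3,6,8,9,0]]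

lemma eidx_pidx : ∀ p q : Fin 5, ∀ h : K5.Adj p q,
    eidx ⟨s(p,q), h⟩ = pidx p q := by decide

abbrev step (t : Fin 6) (a b : Fin 5) (p q : Fin 5) : Prop :=
  p = q ∨ (p ≠ q ∧ (C t (pidx p q) = a ∨ C t (pidx p q) = b))

lemma step_sound (t : Fin 6) (a b : Fin 5) (p q : Fin 5) (h : step t a b p q) :
    (kempeGraph K5 (φs t) a b).Reachable p q := by
  rcases h with rfl | ⟨hne, hc⟩
  · exact SimpleGraph.Reachable.refl p
  · refine SimpleGraph.Adj.reachable ⟨hne, ?_⟩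
    rw [show (φs t ⟨s(p,q), hne⟩) = C t (pidx p q) from by
      rw [φs, eidx_pidx p q hne]]
    exact hc

set_option maxRecDepth 4000 in
lemma kreach0 : ∀ (t : Fin 6) (a b : Fin 5), a ≠ b → ∀ v : Fin 5,
    ∃ x y z : Fin 5, step t a b 0 x ∧ step t a b x y ∧ step t a b y z ∧ step t a b z v := by
  decide

lemma kreach (t : Fin 6) (a b : Fin 5) (hab : a ≠ b) (u v : Fin 5) :
    (kempeGraph K5 (φs t) a b).Reachable u v := by
  have h0 : ∀ w, (kempeGraph K5 (φs t) a b).Reachable 0 w := by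
    intro w
    obtain ⟨x, y, z, h1, h2, h3, h4⟩ := kreach0 t a b hab w
    exact ((step_sound t a b _ _ h1).trans (step_sound t a b _ _ h2)).trans
      ((step_sound t a b _ _ h3).trans (step_sound t a b _ _ h4))
  exact (h0 u).symm.trans (h0 v)

lemma kempe_graph_congr (φ : K5.edgeSet → Fin 5) (t : Fin 6) (σ : Equiv.Perm (Fin 5))
    (hφ : ∀ e, φ e = σ (φs t e)) (a b : Fin 5) :
    kempeGraph K5 φ a b = kempeGraph K5 (φs t) (σ.symm a) (σ.symm b) := by
  refine SimpleGraph.ext ?_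
  ext u v
  constructor
  · rintro ⟨h, hc⟩
    refine ⟨h, ?_⟩
    rw [hφ] at hc
    rcases hc with hc | hc
    · exact Or.inl (by rw [← hc, Equiv.symm_apply_apply])
    · exact Or.inr (by rw [← hc, Equiv.symm_apply_apply])
  · rintro ⟨h, hc⟩
    refine ⟨h, ?_⟩
    rw [hφ]
    rcases hc with hc | hc
    · exact Or.inl (by rw [hc, Equiv.apply_symm_apply])
    · exact Or.inr (by rw [hc, Equiv.apply_symm_apply])

/-! ### Part 2: every Kempe change is a colour permutation -/

lemma kempe_change_perm (φ ψ : K5.edgeSet → Fin 5) (hφ : IsProperEdgeColoring K5 5 φ)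
    (hch : KempeChange K5 5 φ ψ) : PermRelated K5 5 φ ψ := by
  obtain ⟨a, b, w, hK⟩ := hch
  by_cases hab : a = b
  · subst hab
    refine ⟨Equiv.refl _, fun e => ?_⟩
    rcases Classical.em (InKempeChain K5 φ a a w e) with hin | hout
    · rw [(hK e).1 hin, Equiv.swap_self]
    · rw [(hK e).2 hout]; rfl
  · obtain ⟨t, σ, hσ⟩ := classify φ hφ
    have hKG := kempe_graph_congr φ t σ hσ a b
    have hab' : σ.symm a ≠ σ.symm b := fun hh => hab (by
      have := congrArg σ hh
      rwa [Equiv.apply_symm_apply, Equiv.apply_symm_apply] at this)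
    have hreach : ∀ u v : Fin 5, (kempeGraph K5 φ a b).Reachable u v := by
      intro u v
      rw [hKG]
      exact kreach t _ _ hab' u v
    refine ⟨Equiv.swap a b, fun e => ?_⟩
    rcases Classical.em (InKempeChain K5 φ a b w e) with hin | hout
    · exact (hK e).1 hin
    · rw [(hK e).2 hout]
      have hnot : ¬(φ e = a ∨ φ e = b) := fun hc =>
        hout ⟨hc, (↑e : Sym2 (Fin 5)).out.1, Sym2.out_fst_mem _, hreach w _⟩
      push_neg at hnot
      rw [Equiv.swap_apply_of_ne_of_ne hnot.1 hnot.2]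

/-! ### helpers for Part 1 and Part 3 -/

lemma distinctC : ∀ i j : Fin 6, i ≠ j →
    ∃ k₁ k₂ : Fin 10, C i k₁ = C i k₂ ∧ C j k₁ ≠ C j k₂ := by decide

lemma not_perm (i j : Fin 6) (hij : i ≠ j) : ¬ PermRelated K5 5 (φs i) (φs j) := by
  rintro ⟨σ, hσ⟩
  obtain ⟨k₁, k₂, h1, h2⟩ := distinctC i j hij
  have e1 := hσ (Es k₁)
  have e2 := hσ (Es k₂)
  rw [phis_Es, phis_Es] at e1 e2
  exact h2 (by rw [e1, e2, h1])

lemma perm_proper {φ ψ : K5.edgeSet → Fin 5} (h : IsProperEdgeColoring K5 5 φ)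
    (σ : Equiv.Perm (Fin 5)) (hσ : ∀ e, ψ e = σ (φ e)) : IsProperEdgeColoring K5 5 ψ :=
  fun e1 e2 hne hsh heq => h e1 e2 hne hsh (σ.injective (by rw [← hσ, ← hσ, heq]))

lemma kempeEquiv_perm {φ ψ : K5.edgeSet → Fin 5} (hφ : IsProperEdgeColoring K5 5 φ)
    (h : KempeEquiv K5 5 φ ψ) : PermRelated K5 5 φ ψ := by
  induction h with
  | refl => exact ⟨Equiv.refl _, fun e => rfl⟩
  | tail hstep hchange ih =>
    obtain ⟨σ, hσ⟩ := ih
    obtain ⟨τ, hτ⟩ := kempe_change_perm _ _ (perm_proper hφ σ hσ) hchange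
    exact ⟨σ.trans τ, fun e => by rw [hτ, hσ]; rfl⟩

/-! ### Main theorem -/

theorem kappa_K5_eq_six' :
    (∃ φs : Fin 6 → ((completeGraph (Fin 5)).edgeSet → Fin 5),
      (∀ i, IsProperEdgeColoring (completeGraph (Fin 5)) 5 (φs i)) ∧
      (∀ i j, i ≠ j → ¬ PermRelated (completeGraph (Fin 5)) 5 (φs i) (φs j)) ∧
      (∀ ψ : (completeGraph (Fin 5)).edgeSet → Fin 5,
        IsProperEdgeColoring (completeGraph (Fin 5)) 5 ψ →
          ∃ i, PermRelated (completeGraph (Fin 5)) 5 (φs i) ψ)) ∧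
    (∀ φ ψ : (completeGraph (Fin 5)).edgeSet → Fin 5,
      IsProperEdgeColoring (completeGraph (Fin 5)) 5 φ →
      KempeChange (completeGraph (Fin 5)) 5 φ ψ →
        PermRelated (completeGraph (Fin 5)) 5 φ ψ) ∧
    (∃ φs : Fin 6 → ((completeGraph (Fin 5)).edgeSet → Fin 5),
      (∀ i, IsProperEdgeColoring (completeGraph (Fin 5)) 5 (φs i)) ∧
      (∀ i j, i ≠ j → ¬ KempePermEquiv (completeGraph (Fin 5)) 5 (φs i) (φs j)) ∧
      (∀ ψ : (completeGraph (Fin 5)).edgeSet → Fin 5,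
        IsProperEdgeColoring (completeGraph (Fin 5)) 5 ψ →
          ∃ i, KempePermEquiv (completeGraph (Fin 5)) 5 (φs i) ψ)) := by
  refine ⟨⟨φs, proper_phis, not_perm, fun ψ hψ => ?_⟩,
    kempe_change_perm, ⟨φs, proper_phis, fun i j hij hKPE => ?_, fun ψ hψ => ?_⟩⟩
  · obtain ⟨t, σ, hσ⟩ := classify ψ hψ
    exact ⟨t, σ, hσ⟩
  · obtain ⟨ψ', ⟨τ, hτ⟩, hKE⟩ := hKPE
    obtain ⟨σ, hσ⟩ := kempeEquiv_perm (proper_phis i) hKE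
    refine not_perm i j hij ⟨σ.trans τ.symm, fun e => ?_⟩
    have : τ.symm (ψ' e) = φs j e := by rw [hτ]; exact τ.symm_apply_apply _
    rw [← this, hσ]; rfl
  · obtain ⟨t, σ, hσ⟩ := classify ψ hψ
    refine ⟨t, φs t, ⟨σ.symm, fun e => ?_⟩, Relation.ReflTransGen.refl⟩
    rw [hσ]; exact (σ.symm_apply_apply _).symm

/-- **Proposition.** `K₅` has exactly six proper 5-edge-colourings up to permutation of
the colours; no proper 5-edge-colouring of `K₅` admits a nontrivial Kempe change (every
Kempe change produces a colouring differing only by a permutation of the colours);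
consequently, the number of Kempe equivalence classes of proper 5-edge-colourings of
`K₅` (colourings differing by a permutation of colours being identified) is exactly 6,
i.e. `κ_E(K₅, 5) = 6`. -/
theorem kappa_K5_eq_six :
    (∃ φs : Fin 6 → ((completeGraph (Fin 5)).edgeSet → Fin 5),
      (∀ i, IsProperEdgeColoring (completeGraph (Fin 5)) 5 (φs i)) ∧
      (∀ i j, i ≠ j → ¬ PermRelated (completeGraph (Fin 5)) 5 (φs i) (φs j)) ∧
      (∀ ψ : (completeGraph (Fin 5)).edgeSet → Fin 5,
        IsProperEdgeColoring (completeGraph (Fin 5)) 5 ψ →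
          ∃ i, PermRelated (completeGraph (Fin 5)) 5 (φs i) ψ)) ∧
    (∀ φ ψ : (completeGraph (Fin 5)).edgeSet → Fin 5,
      IsProperEdgeColoring (completeGraph (Fin 5)) 5 φ →
      KempeChange (completeGraph (Fin 5)) 5 φ ψ →
        PermRelated (completeGraph (Fin 5)) 5 φ ψ) ∧
    (∃ φs : Fin 6 → ((completeGraph (Fin 5)).edgeSet → Fin 5),
      (∀ i, IsProperEdgeColoring (completeGraph (Fin 5)) 5 (φs i)) ∧
      (∀ i j, i ≠ j → ¬ KempePermEquiv (completeGraph (Fin 5)) 5 (φs i) (φs j)) ∧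
      (∀ ψ : (completeGraph (Fin 5)).edgeSet → Fin 5,
        IsProperEdgeColoring (completeGraph (Fin 5)) 5 ψ →
          ∃ i, KempePermEquiv (completeGraph (Fin 5)) 5 (φs i) ψ)) :=
  kappa_K5_eq_six'
end

section
/- Let G be a graph and let φ and ψ be proper k-edge-colourings of G. Let F = {e ∈ E(G) : φ(e) ≠ ψ(e)}. If F is the edge set of a union of vertex-disjoint paths in G, then φ and ψ are Kempe equivalent. -/
open SimpleGraph

section WalkAux

variable {V : Type*} {G : SimpleGraph V}

lemma getVert_mem_support' {u v : V} (W : G.Walk u v) (i : ℕ) :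
    W.getVert i ∈ W.support := by
  rcases le_or_gt i W.length with h | h
  · exact Walk.mem_support_iff_exists_getVert.mpr ⟨i, rfl, h⟩
  · rw [Walk.getVert_of_length_le W h.le]
    exact W.end_mem_support

lemma mem_edges_iff' {u v : V} (W : G.Walk u v) (e : Sym2 V) :
    e ∈ W.edges ↔ ∃ i, i < W.length ∧ e = s(W.getVert i, W.getVert (i+1)) := by
  induction W with
  | nil => simp
  | @cons x y z h q ih =>
    rw [Walk.edges_cons, List.mem_cons, ih]
    constructor
    · rintro (rfl | ⟨i, hi, rfl⟩)
      · refine ⟨0, by simp, ?_⟩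
        simp [Walk.getVert_zero, Walk.getVert_cons_succ]
      · exact ⟨i+1, by simp; omega, by simp [Walk.getVert_cons_succ]⟩
    · rintro ⟨i, hi, rfl⟩
      cases i with
      | zero =>
        left
        simp [Walk.getVert_zero, Walk.getVert_cons_succ]
      | succ i =>
        right
        refine ⟨i, by simp at hi; omega, by simp [Walk.getVert_cons_succ]⟩

lemma getVert_inj' {u v : V} {W : G.Walk u v} (hW : W.IsPath) {i j : ℕ}
    (hi : i ≤ W.length) (hj : j ≤ W.length) (h : W.getVert i = W.getVert j) :
    i = j := by
  induction W generalizing i j with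
  | nil => simp at hi hj; omega
  | @cons x y z hadj q ih =>
    rw [Walk.cons_isPath_iff] at hW
    cases i with
    | zero =>
      cases j with
      | zero => rfl
      | succ j =>
        exfalso
        rw [Walk.getVert_zero, Walk.getVert_cons_succ] at h
        exact hW.2 (Walk.mem_support_iff_exists_getVert.mpr
          ⟨j, h.symm, by simp at hj; omega⟩)
    | succ i =>
      cases j with
      | zero =>
        exfalso
        rw [Walk.getVert_zero, Walk.getVert_cons_succ] at h
        exact hW.2 (Walk.mem_support_iff_exists_getVert.mpr
          ⟨i, h, by simp at hi; omega⟩)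
      | succ j =>
        rw [Walk.getVert_cons_succ, Walk.getVert_cons_succ] at h
        simp only [Walk.length_cons] at hi hj
        rw [ih hW.1 (by omega) (by omega) h]

lemma getVert_drop' {u v : V} (W : G.Walk u v) (n i : ℕ) :
    (W.drop n).getVert i = W.getVert (n + i) := by
  induction W generalizing n with
  | nil => cases n <;> rfl
  | @cons x y z h q ih =>
    cases n with
    | zero => simp [Walk.drop]
    | succ n =>
      show (q.drop n).getVert i = _
      rw [ih, show n+1+i = (n+i)+1 from by omega,
        Walk.getVert_cons_succ]

lemma length_drop' {u v : V} (W : G.Walk u v) (n : ℕ) :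
    (W.drop n).length = W.length - n := by
  induction W generalizing n with
  | nil => cases n <;> simp [Walk.drop]
  | @cons x y z h q ih =>
    cases n with
    | zero => simp [Walk.drop]
    | succ n =>
      show (q.drop n).length = _
      rw [ih, Walk.length_cons]
      omega

lemma isPath_drop' {u v : V} {W : G.Walk u v} (hW : W.IsPath) (n : ℕ) :
    (W.drop n).IsPath := by
  induction W generalizing n with
  | nil => cases n <;> simp [Walk.drop, hW]
  | @cons x y z h q ih =>
    cases n with
    | zero => simpa [Walk.drop] using hW
    | succ n =>
      show (q.drop n).IsPath
      exact ih hW.of_cons n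

lemma support_drop_subset' {u v : V} (W : G.Walk u v) (n : ℕ) {x : V}
    (hx : x ∈ (W.drop n).support) : x ∈ W.support := by
  rw [Walk.mem_support_iff_exists_getVert] at hx
  obtain ⟨i, hgv, _⟩ := hx
  rw [getVert_drop'] at hgv
  exact hgv ▸ getVert_mem_support' W (n + i)

end WalkAux

section KempeAux

lemma swap_mem_pair_iff {k : ℕ} (a b x : Fin k) :
    (Equiv.swap a b x = a ∨ Equiv.swap a b x = b) ↔ (x = a ∨ x = b) := by
  constructor
  · rintro (h | h)
    · exact Or.inr ((Equiv.swap a b).injective (h.trans (Equiv.swap_apply_right a b).symm))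
    · exact Or.inl ((Equiv.swap a b).injective (h.trans (Equiv.swap_apply_left a b).symm))
  · rintro (rfl | rfl)
    · exact Or.inr (Equiv.swap_apply_left x b)
    · exact Or.inl (Equiv.swap_apply_right a x)

lemma kempeGraph_adj {V : Type*} (G : SimpleGraph V) {k : ℕ} (φ : G.edgeSet → Fin k)
    (a b : Fin k) (u v : V) :
    (kempeGraph G φ a b).Adj u v ↔
      ∃ h : G.Adj u v, φ ⟨s(u, v), h⟩ = a ∨ φ ⟨s(u, v), h⟩ = b := Iff.rfl

lemma kempeChange_symm {V : Type*} {G : SimpleGraph V} {k : ℕ}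
    {φ ψ : G.edgeSet → Fin k} (h : KempeChange G k φ ψ) : KempeChange G k ψ φ := by
  obtain ⟨a, b, w, h⟩ := h
  have hcol : ∀ e, (ψ e = a ∨ ψ e = b) ↔ (φ e = a ∨ φ e = b) := by
    intro e
    by_cases hc : InKempeChain G φ a b w e
    · rw [(h e).1 hc]; exact swap_mem_pair_iff a b (φ e)
    · rw [(h e).2 hc]
  have hgr : kempeGraph G ψ a b = kempeGraph G φ a b := by
    ext u v
    rw [kempeGraph_adj, kempeGraph_adj]
    constructor
    · rintro ⟨hadj, hc⟩; exact ⟨hadj, (hcol ⟨s(u, v), hadj⟩).mp hc⟩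
    · rintro ⟨hadj, hc⟩; exact ⟨hadj, (hcol ⟨s(u, v), hadj⟩).mpr hc⟩
  have hch : ∀ e, InKempeChain G ψ a b w e ↔ InKempeChain G φ a b w e := by
    intro e
    unfold InKempeChain
    rw [hgr, hcol e]
  refine ⟨a, b, w, fun e => ⟨fun hc => ?_, fun hc => ?_⟩⟩
  · rw [(h e).1 ((hch e).mp hc), Equiv.swap_apply_self]
  · exact ((h e).2 (fun hc' => hc ((hch e).mpr hc'))).symm

end KempeAux

/-- `φ` alternates colours `b, a, b, a, ...` along the first `m` edges of `W`. -/
abbrev AltPred {V : Type*} (G : SimpleGraph V) {k : ℕ} (φ : G.edgeSet → Fin k)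
    {x y : V} (W : G.Walk x y) (b a : Fin k) (m : ℕ) : Prop :=
  ∀ i < m, ∀ e : G.edgeSet,
    (e : Sym2 V) = s(W.getVert i, W.getVert (i+1)) → φ e = if Even i then b else a

lemma kempe_step {V : Type*} (G : SimpleGraph V) (k : ℕ) (φ ψ : G.edgeSet → Fin k)
    (hφ : IsProperEdgeColoring G k φ) (hψ : IsProperEdgeColoring G k ψ)
    (n : ℕ) (P : Fin n → Σ u : V, Σ v : V, G.Walk u v)
    (hpath : ∀ i, (P i).2.2.IsPath)
    (hdisj : ∀ i j, i ≠ j → ∀ x : V, x ∈ (P i).2.2.support → x ∉ (P j).2.2.support)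
    (hF : ∀ e : G.edgeSet, φ e ≠ ψ e ↔ ∃ i, (e : Sym2 V) ∈ (P i).2.2.edges)
    (i0 : Fin n) (a b : Fin k) (p : ℕ) (hp1 : 1 ≤ p) (hpl : p ≤ (P i0).2.2.length)
    (halt : AltPred G φ (P i0).2.2 b a p)
    (hqalt : AltPred G ψ (P i0).2.2 a b p)
    (hmax : p < (P i0).2.2.length → ∀ e : G.edgeSet,
      (e : Sym2 V) = s((P i0).2.2.getVert p, (P i0).2.2.getVert (p+1)) →
      φ e ≠ if Even p then b else a) :
    ∃ (φ' : G.edgeSet → Fin k) (P' : Fin n → Σ u : V, Σ v : V, G.Walk u v),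
      KempeChange G k φ φ' ∧ IsProperEdgeColoring G k φ' ∧
      (∀ i, (P' i).2.2.IsPath) ∧
      (∀ i j, i ≠ j → ∀ x : V, x ∈ (P' i).2.2.support → x ∉ (P' j).2.2.support) ∧
      (∀ e : G.edgeSet, φ' e ≠ ψ e ↔ ∃ i, (e : Sym2 V) ∈ (P' i).2.2.edges) ∧
      (∀ i, (P' i).2.2.length ≤ (P i).2.2.length) ∧
      (P' i0).2.2.length < (P i0).2.2.length := by
  classical
  set W := (P i0).2.2 with hWdef
  have h0len : 0 < W.length := lt_of_lt_of_le hp1 hpl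
  have hadj0 : G.Adj (W.getVert 0) (W.getVert 1) := W.adj_getVert_succ h0len
  set e0 : G.edgeSet := ⟨s(W.getVert 0, W.getVert 1), hadj0⟩ with he0def
  have hb0 : φ e0 = b := by simpa using halt 0 hp1 e0 rfl
  have ha0 : ψ e0 = a := by simpa using hqalt 0 hp1 e0 rfl
  have hab : a ≠ b := by
    have hne : φ e0 ≠ ψ e0 :=
      (hF e0).mpr ⟨i0, (mem_edges_iff' W _).mpr ⟨0, h0len, rfl⟩⟩
    rw [hb0, ha0] at hne
    exact fun h => hne h.symm
  have hcd_ne : ∀ i : ℕ, (if Even i then b else a) ≠ (if Even i then a else b) := by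
    intro i; split_ifs
    · exact fun h => hab h.symm
    · exact hab
  have hdc : ∀ i : ℕ, (if Even (i+1) then b else a) = (if Even i then a else b) := by
    intro i
    by_cases h : Even i <;> simp [Nat.even_add_one, h]
  have hswap_c : ∀ i : ℕ,
      Equiv.swap a b (if Even i then b else a) = (if Even i then a else b) := by
    intro i; split_ifs
    · exact Equiv.swap_apply_right a b
    · exact Equiv.swap_apply_left a b
  have hmem_c : ∀ (i : ℕ) (x : Fin k), x = (if Even i then b else a) → (x = a ∨ x = b) := by
    intro i x hx; split_ifs at hx
    · exact Or.inr hx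
    · exact Or.inl hx
  have hmem_d : ∀ (i : ℕ) (x : Fin k), x = (if Even i then a else b) → (x = a ∨ x = b) := by
    intro i x hx; split_ifs at hx
    · exact Or.inl hx
    · exact Or.inr hx
  have hpair : ∀ (i : ℕ) (x : Fin k), x ≠ (if Even i then b else a) →
      x ≠ (if Even i then a else b) → ¬(x = a ∨ x = b) := by
    intro i x h1 h2; split_ifs at h1 h2 <;> tauto
  -- The crucial closure lemma: any edge of colour a or b incident to a vertex of the
  -- alternating prefix of W is itself an edge of the prefix.
  have crux : ∀ (e : G.edgeSet) (i : ℕ), i ≤ p → W.getVert i ∈ (e : Sym2 V) →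
      (φ e = a ∨ φ e = b) →
      ∃ j, j < p ∧ (e : Sym2 V) = s(W.getVert j, W.getVert (j+1)) := by
    intro e i hip hxe hcol
    by_cases hFe : φ e = ψ e
    · exfalso
      rcases Nat.eq_zero_or_pos i with rfl | hi0
      · have hnee : e ≠ e0 := by
          intro h
          rw [h, hb0, ha0] at hFe
          exact hab hFe.symm
        have hsh : ∃ x, x ∈ (e : Sym2 V) ∧ x ∈ (e0 : Sym2 V) :=
          ⟨W.getVert 0, hxe, Sym2.mem_mk_left _ _⟩
        have h1 : φ e ≠ φ e0 := hφ e e0 hnee hsh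
        have h2 : ψ e ≠ ψ e0 := hψ e e0 hnee hsh
        rw [hb0] at h1
        rw [ha0, ← hFe] at h2
        rcases hcol with h | h
        · exact h2 h
        · exact h1 h
      · obtain ⟨i', rfl⟩ : ∃ i', i = i' + 1 := ⟨i - 1, by omega⟩
        have hi'p : i' < p := by omega
        have hi'l : i' < W.length := lt_of_lt_of_le hi'p hpl
        set E' : G.edgeSet := ⟨s(W.getVert i', W.getVert (i'+1)), W.adj_getVert_succ hi'l⟩
          with hE'def
        have hφE : φ E' = if Even i' then b else a := halt i' hi'p E' rfl
        have hψE : ψ E' = if Even i' then a else b := hqalt i' hi'p E' rfl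
        have hnee : e ≠ E' := by
          intro h
          rw [h, hφE, hψE] at hFe
          exact hcd_ne i' hFe
        have hsh : ∃ x, x ∈ (e : Sym2 V) ∧ x ∈ (E' : Sym2 V) :=
          ⟨W.getVert (i'+1), hxe, Sym2.mem_mk_right _ _⟩
        have h1 : φ e ≠ _ := (hφ e E' hnee hsh).trans_eq hφE
        exact hpair i' (φ e) (fun hh => hφ e E' hnee hsh (hh.trans hφE.symm))
          (fun hh => hψ e E' hnee hsh (hFe ▸ (hh.trans hψE.symm))) hcol
    · obtain ⟨j', hej'⟩ := (hF e).mp hFe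
      obtain ⟨y, hey⟩ := Sym2.mem_iff_exists.mp hxe
      have hsupW : W.getVert i ∈ W.support := getVert_mem_support' W i
      have hj0 : j' = i0 := by
        by_contra hne'
        have hmem : W.getVert i ∈ (P j').2.2.support := by
          rw [hey] at hej'
          exact (P j').2.2.fst_mem_support_of_mem_edges hej'
        exact hdisj i0 j' (fun h => hne' h.symm) _ hsupW hmem
      rw [hj0] at hej'
      rw [← hWdef, mem_edges_iff'] at hej'
      obtain ⟨j, hjl, hej⟩ := hej'
      have hmemj : W.getVert i = W.getVert j ∨ W.getVert i = W.getVert (j+1) := by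
        rw [hej] at hxe
        exact Sym2.mem_iff.mp hxe
      have hij : i = j ∨ i = j + 1 := by
        rcases hmemj with h | h
        · exact Or.inl (getVert_inj' (hpath i0) (le_trans hip hpl) hjl.le h)
        · exact Or.inr (getVert_inj' (hpath i0) (le_trans hip hpl) hjl h)
      by_cases hjp : j < p
      · exact ⟨j, hjp, hej⟩
      · exfalso
        have hjep : j = p := by omega
        rw [hjep] at hej hjl
        have h1 : φ e ≠ if Even p then b else a := hmax hjl e hej
        have hp1l : p - 1 < W.length := by omega
        have hpp : p - 1 + 1 = p := by omega
        have hadj' : G.Adj (W.getVert (p-1)) (W.getVert p) := by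
          have := W.adj_getVert_succ hp1l
          rwa [hpp] at this
        set E' : G.edgeSet := ⟨s(W.getVert (p-1), W.getVert p), hadj'⟩ with hE'def
        have hφE : φ E' = if Even (p-1) then b else a := by
          refine halt (p-1) (by omega) E' ?_
          rw [hpp]
        have hnee : e ≠ E' := by
          intro h
          have hval : (e : Sym2 V) = (E' : Sym2 V) := by rw [h]
          rw [hej] at hval
          rcases Sym2.eq_iff.mp hval with ⟨h1', h2'⟩ | ⟨h1', h2'⟩
          · have := getVert_inj' (W := W) (i := p) (j := p - 1) (hpath i0) (by omega) (by omega) h1'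
            omega
          · have := getVert_inj' (W := W) (i := p + 1) (j := p - 1) (hpath i0) (by omega) (by omega) h2'
            omega
        have hsh : ∃ x, x ∈ (e : Sym2 V) ∧ x ∈ (E' : Sym2 V) := by
          refine ⟨W.getVert p, ?_, Sym2.mem_mk_right _ _⟩
          rw [hej]
          exact Sym2.mem_mk_left _ _
        have h2 : φ e ≠ if Even (p-1) then b else a :=
          fun hh => hφ e E' hnee hsh (hh.trans hφE.symm)
        have hcp : (if Even p then b else a) = (if Even (p-1) then a else b) := by
          conv_lhs => rw [← hpp]
          exact hdc (p-1)
        rw [hcp] at h1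
        exact hpair (p-1) (φ e) h2 h1 hcol
  -- reachability from the start of W stays in the prefix
  have reach_sub : ∀ (x y : V), (kempeGraph G φ a b).Walk x y →
      (∃ i, i ≤ p ∧ x = W.getVert i) → ∃ i, i ≤ p ∧ y = W.getVert i := by
    intro x y wxy
    induction wxy with
    | nil => exact id
    | @cons x' z' y' hadj rest ih =>
      rintro ⟨i, hip, rfl⟩
      apply ih
      rw [kempeGraph_adj] at hadj
      obtain ⟨hG, hcol⟩ := hadj
      obtain ⟨j, hjp, hej⟩ := crux ⟨s(_, z'), hG⟩ i hip (Sym2.mem_mk_left _ _) hcol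
      rcases Sym2.eq_iff.mp hej with ⟨h1, h2⟩ | ⟨h1, h2⟩
      · exact ⟨j+1, by omega, h2.symm ▸ rfl⟩
      · exact ⟨j, by omega, h2.symm ▸ rfl⟩
  have reach_sup : ∀ i, i ≤ p →
      (kempeGraph G φ a b).Reachable (W.getVert 0) (W.getVert i) := by
    intro i
    induction i with
    | zero => intro _; exact Reachable.refl _
    | succ i ih =>
      intro h
      have hil : i < W.length := lt_of_lt_of_le (by omega : i < p) hpl
      refine (ih (by omega)).trans (SimpleGraph.Adj.reachable ?_)
      rw [kempeGraph_adj]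
      refine ⟨W.adj_getVert_succ hil, ?_⟩
      have := halt i (by omega) ⟨_, W.adj_getVert_succ hil⟩ rfl
      exact hmem_c i _ this
  have chain_iff : ∀ e : G.edgeSet, InKempeChain G φ a b (W.getVert 0) e ↔
      ∃ j, j < p ∧ (e : Sym2 V) = s(W.getVert j, W.getVert (j+1)) := by
    intro e
    constructor
    · rintro ⟨hcol, u, hue, hreach⟩
      obtain ⟨wlk⟩ := hreach
      obtain ⟨i, hip, rfl⟩ := reach_sub _ _ wlk ⟨0, Nat.zero_le p, rfl⟩
      exact crux e i hip hue hcol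
    · rintro ⟨j, hjp, hej⟩
      refine ⟨hmem_c j _ (halt j hjp e hej), W.getVert j, ?_, reach_sup j hjp.le⟩
      rw [hej]
      exact Sym2.mem_mk_left _ _
  set φ' : G.edgeSet → Fin k :=
    fun e => if InKempeChain G φ a b (W.getVert 0) e then Equiv.swap a b (φ e) else φ e
    with hφ'def
  have hchange : KempeChange G k φ φ' :=
    ⟨a, b, W.getVert 0, fun e => ⟨fun h => by simp only [hφ'def]; rw [if_pos h],
      fun h => by simp only [hφ'def]; rw [if_neg h]⟩⟩
  have hφ'chain_raw : ∀ e : G.edgeSet,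
      (∃ j, j < p ∧ (e : Sym2 V) = s(W.getVert j, W.getVert (j+1))) →
      φ' e = Equiv.swap a b (φ e) := by
    intro e h
    simp only [hφ'def]
    rw [if_pos ((chain_iff e).mpr h)]
  have hφ'chain : ∀ (j : ℕ), j < p → ∀ e : G.edgeSet,
      (e : Sym2 V) = s(W.getVert j, W.getVert (j+1)) →
      φ' e = if Even j then a else b := by
    intro j hjp e hej
    rw [hφ'chain_raw e ⟨j, hjp, hej⟩, halt j hjp e hej]
    exact hswap_c j
  have hφ'not : ∀ e : G.edgeSet,
      ¬(∃ j, j < p ∧ (e : Sym2 V) = s(W.getVert j, W.getVert (j+1))) → φ' e = φ e := by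
    intro e h
    simp only [hφ'def]
    rw [if_neg (fun hc => h ((chain_iff e).mp hc))]
  have hφ'proper : IsProperEdgeColoring G k φ' := by
    have key : ∀ e1 e2 : G.edgeSet, e1 ≠ e2 →
        (∃ v, v ∈ (e1 : Sym2 V) ∧ v ∈ (e2 : Sym2 V)) →
        (∃ j, j < p ∧ (e1 : Sym2 V) = s(W.getVert j, W.getVert (j+1))) →
        ¬(∃ j, j < p ∧ (e2 : Sym2 V) = s(W.getVert j, W.getVert (j+1))) →
        φ' e1 ≠ φ' e2 := by
      rintro e1 e2 hne ⟨v, hv1, hv2⟩ ⟨j, hjp, hej⟩ h2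
      rw [hφ'chain j hjp e1 hej, hφ'not e2 h2]
      intro heq
      have hvi : ∃ i, i ≤ p ∧ v = W.getVert i := by
        rw [hej] at hv1
        rcases Sym2.mem_iff.mp hv1 with h | h
        · exact ⟨j, by omega, h⟩
        · exact ⟨j+1, by omega, h⟩
      obtain ⟨i, hip, rfl⟩ := hvi
      have hcol2 : φ e2 = a ∨ φ e2 = b := hmem_d j _ heq.symm
      exact h2 (crux e2 i hip hv2 hcol2)
    intro e1 e2 hne hsh
    by_cases h1 : ∃ j, j < p ∧ (e1 : Sym2 V) = s(W.getVert j, W.getVert (j+1)) <;>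
      by_cases h2 : ∃ j, j < p ∧ (e2 : Sym2 V) = s(W.getVert j, W.getVert (j+1))
    · rw [hφ'chain_raw e1 h1, hφ'chain_raw e2 h2]
      intro heq
      exact hφ e1 e2 hne hsh ((Equiv.swap a b).injective heq)
    · exact key e1 e2 hne hsh h1 h2
    · obtain ⟨v, hv1, hv2⟩ := hsh
      exact (key e2 e1 hne.symm ⟨v, hv2, hv1⟩ h2 h1).symm
    · rw [hφ'not e1 h1, hφ'not e2 h2]
      exact hφ e1 e2 hne hsh
  -- the new family of paths
  set P' : Fin n → Σ u : V, Σ v : V, G.Walk u v :=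
    Function.update P i0 ⟨W.getVert p, (P i0).2.1, W.drop p⟩ with hP'def
  have hP'i0 : P' i0 = ⟨W.getVert p, (P i0).2.1, W.drop p⟩ := by
    simp only [hP'def]
    exact Function.update_self _ _ _
  have hP'ne : ∀ i, i ≠ i0 → P' i = P i := by
    intro i h
    simp only [hP'def]
    exact Function.update_of_ne h _ _
  have hdropedge : ∀ e : Sym2 V, e ∈ (W.drop p).edges ↔
      ∃ m, p + m < W.length ∧ e = s(W.getVert (p+m), W.getVert (p+m+1)) := by
    intro e
    rw [mem_edges_iff']
    constructor
    · rintro ⟨m, hm, rfl⟩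
      rw [length_drop'] at hm
      exact ⟨m, by omega, by rw [getVert_drop', getVert_drop', ← Nat.add_assoc]⟩
    · rintro ⟨m, hm, rfl⟩
      exact ⟨m, by rw [length_drop']; omega, by rw [getVert_drop', getVert_drop', ← Nat.add_assoc]⟩
  have hWdropiff : ∀ e : G.edgeSet,
      ¬(∃ j, j < p ∧ (e : Sym2 V) = s(W.getVert j, W.getVert (j+1))) →
      ((e : Sym2 V) ∈ W.edges ↔ (e : Sym2 V) ∈ (W.drop p).edges) := by
    intro e hnc
    rw [mem_edges_iff', hdropedge]
    constructor
    · rintro ⟨j, hj, hej⟩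
      have hjp : ¬ j < p := fun h => hnc ⟨j, h, hej⟩
      refine ⟨j - p, by omega, ?_⟩
      rw [show p + (j - p) = j from by omega]
      exact hej
    · rintro ⟨m, hm, hem⟩
      exact ⟨p + m, hm, hem⟩
  have hchain_not_drop : ∀ (e : G.edgeSet) (j : ℕ), j < p →
      (e : Sym2 V) = s(W.getVert j, W.getVert (j+1)) →
      (e : Sym2 V) ∉ (W.drop p).edges := by
    intro e j hjp hej hmem
    rw [hdropedge] at hmem
    obtain ⟨m, hm, hem⟩ := hmem
    rw [hej] at hem
    rcases Sym2.eq_iff.mp hem with ⟨h1, h2⟩ | ⟨h1, h2⟩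
    · have := getVert_inj' (W := W) (i := j) (j := p + m) (hpath i0) (by omega) (by omega) h1
      omega
    · have := getVert_inj' (W := W) (i := j) (j := p + m + 1) (hpath i0) (by omega) (by omega) h1
      omega
  have hsupdrop : ∀ x : V, x ∈ (W.drop p).support → x ∈ W.support :=
    fun x hx => support_drop_subset' W p hx
  refine ⟨φ', P', hchange, hφ'proper, ?_, ?_, ?_, ?_, ?_⟩
  · intro i
    by_cases h : i = i0
    · subst h
      rw [hP'i0]
      exact isPath_drop' (hpath i) p
    · rw [hP'ne i h]
      exact hpath i
  · intro i j hne x hxi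
    by_cases hi : i = i0 <;> by_cases hj : j = i0
    · exact absurd (hi.trans hj.symm) hne
    · rw [hi, hP'i0] at hxi
      rw [hP'ne j hj]
      exact hdisj i0 j (fun h => hj h.symm) x (hsupdrop x hxi)
    · rw [hP'ne i hi] at hxi
      rw [hj, hP'i0]
      intro hmem
      exact hdisj i0 i (fun h => hi h.symm) x (hsupdrop x hmem) hxi
    · rw [hP'ne i hi] at hxi
      rw [hP'ne j hj]
      exact hdisj i j hne x hxi
  · intro e
    by_cases hc : ∃ j, j < p ∧ (e : Sym2 V) = s(W.getVert j, W.getVert (j+1))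
    · obtain ⟨j, hjp, hej⟩ := hc
      have hL : φ' e = ψ e := by
        rw [hφ'chain j hjp e hej, hqalt j hjp e hej]
      have hR : ¬ ∃ i, (e : Sym2 V) ∈ (P' i).2.2.edges := by
        rintro ⟨i, hi⟩
        by_cases h : i = i0
        · subst h
          rw [hP'i0] at hi
          exact hchain_not_drop e j hjp hej hi
        · rw [hP'ne i h] at hi
          have hmem : W.getVert j ∈ (P i).2.2.support := by
            rw [hej] at hi
            exact (P i).2.2.fst_mem_support_of_mem_edges hi
          exact hdisj i0 i (fun hh => h hh.symm) _ (getVert_mem_support' W j) hmem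
      exact ⟨fun h => absurd hL h, fun h => absurd h hR⟩
    · rw [hφ'not e hc, hF e]
      refine exists_congr fun i => ?_
      by_cases h : i = i0
      · subst h
        rw [hP'i0]
        exact hWdropiff e hc
      · rw [hP'ne i h]
  · intro i
    by_cases h : i = i0
    · subst h
      rw [hP'i0]
      show (W.drop p).length ≤ W.length
      rw [length_drop']
      omega
    · rw [hP'ne i h]
  · rw [hP'i0]
    show (W.drop p).length < W.length
    rw [length_drop']
    omega


/-- **Lemma (path lemma).** Let `φ` and `ψ` be proper `k`-edge-colourings of `G`, and let
`F = {e ∈ E(G) : φ(e) ≠ ψ(e)}`. If `F` is the edge set of a union of vertex-disjoint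
paths in `G`, then `φ` and `ψ` are Kempe equivalent. -/
theorem kempe_equiv_of_diff_on_disjoint_paths {V : Type*} [Fintype V]
    (G : SimpleGraph V) (k : ℕ) (φ ψ : G.edgeSet → Fin k)
    (hφ : IsProperEdgeColoring G k φ) (hψ : IsProperEdgeColoring G k ψ)
    (n : ℕ) (P : Fin n → Σ u : V, Σ v : V, G.Walk u v)
    (hpath : ∀ i, (P i).2.2.IsPath)
    (hdisj : ∀ i j, i ≠ j →
      ∀ x : V, x ∈ (P i).2.2.support → x ∉ (P j).2.2.support)
    (hF : ∀ e : G.edgeSet, φ e ≠ ψ e ↔ ∃ i, (e : Sym2 V) ∈ (P i).2.2.edges) :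
    KempeEquiv G k φ ψ := by
  classical
  suffices H : ∀ (N : ℕ) (φ ψ : G.edgeSet → Fin k),
      IsProperEdgeColoring G k φ → IsProperEdgeColoring G k ψ →
      ∀ P : Fin n → Σ u : V, Σ v : V, G.Walk u v,
      (∀ i, (P i).2.2.IsPath) →
      (∀ i j, i ≠ j → ∀ x : V, x ∈ (P i).2.2.support → x ∉ (P j).2.2.support) →
      (∀ e : G.edgeSet, φ e ≠ ψ e ↔ ∃ i, (e : Sym2 V) ∈ (P i).2.2.edges) →
      (∑ i, (P i).2.2.length) ≤ N → KempeEquiv G k φ ψ by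
    exact H (∑ i, (P i).2.2.length) φ ψ hφ hψ P hpath hdisj hF le_rfl
  intro N
  induction N with
  | zero =>
    intro φ ψ hφ hψ P hpath hdisj hF hsum
    have hzero : ∀ i, (P i).2.2.length = 0 := by
      intro i
      have h1 : (P i).2.2.length ≤ ∑ j, (P j).2.2.length :=
        Finset.single_le_sum (f := fun j => (P j).2.2.length)
          (fun j _ => Nat.zero_le _) (Finset.mem_univ i)
      omega
    have : φ = ψ := by
      funext e
      by_contra he
      obtain ⟨i, hi⟩ := (hF e).mp he
      have h1 : (P i).2.2.edges.length = 0 := by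
        rw [SimpleGraph.Walk.length_edges, hzero i]
      rw [List.length_eq_zero_iff] at h1
      rw [h1] at hi
      exact List.not_mem_nil hi
    rw [this]
    exact Relation.ReflTransGen.refl
  | succ N IH =>
    intro φ ψ hφ hψ P hpath hdisj hF hsum
    by_cases hagree : ∀ e, φ e = ψ e
    · have : φ = ψ := funext hagree
      rw [this]
      exact Relation.ReflTransGen.refl
    · push_neg at hagree
      obtain ⟨e, he⟩ := hagree
      obtain ⟨i0, hei0⟩ := (hF e).mp he
      have h0len : 0 < (P i0).2.2.length := by
        have h1 : (P i0).2.2.edges ≠ [] := List.ne_nil_of_mem hei0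
        have h2 := SimpleGraph.Walk.length_edges (P i0).2.2
        rcases Nat.eq_zero_or_pos (P i0).2.2.length with h | h
        · rw [h] at h2
          exact absurd (List.length_eq_zero_iff.mp h2) h1
        · exact h
      set W := (P i0).2.2 with hWdef
      have hadj0 : G.Adj (W.getVert 0) (W.getVert 1) := W.adj_getVert_succ h0len
      set e0 : G.edgeSet := ⟨s(W.getVert 0, W.getVert 1), hadj0⟩ with he0def
      set b := φ e0 with hbdef
      set a := ψ e0 with hadef
      have hQφ1 : AltPred G φ W b a 1 := by
        intro i hi e' he'
        have hi0 : i = 0 := by omega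
        subst hi0
        have : e' = e0 := Subtype.ext (by rw [he'])
        rw [this, if_pos (Even.zero)]
      have hQψ1 : AltPred G ψ W a b 1 := by
        intro i hi e' he'
        have hi0 : i = 0 := by omega
        subst hi0
        have : e' = e0 := Subtype.ext (by rw [he'])
        rw [this, if_pos (Even.zero)]
      set p := Nat.findGreatest (AltPred G φ W b a) W.length with hpdef
      set q := Nat.findGreatest (AltPred G ψ W a b) W.length with hqdef
      have hp1 : 1 ≤ p := Nat.le_findGreatest h0len hQφ1
      have hq1 : 1 ≤ q := Nat.le_findGreatest h0len hQψ1
      have hpl : p ≤ W.length := Nat.findGreatest_le W.length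
      have hql : q ≤ W.length := Nat.findGreatest_le W.length
      have hQφp : AltPred G φ W b a p := Nat.findGreatest_spec h0len hQφ1
      have hQψq : AltPred G ψ W a b q := Nat.findGreatest_spec h0len hQψ1
      have hmaxφ : p < W.length → ∀ e' : G.edgeSet,
          (e' : Sym2 V) = s(W.getVert p, W.getVert (p+1)) →
          φ e' ≠ if Even p then b else a := by
        intro hplt e' he' hcontra
        have hng : ¬ AltPred G φ W b a (p+1) :=
          Nat.findGreatest_is_greatest (Nat.lt_succ_self p) (by omega)
        apply hng
        intro i hi e'' he''
        rcases Nat.lt_succ_iff_lt_or_eq.mp hi with h | h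
        · exact hQφp i h e'' he''
        · subst h
          have : e'' = e' := Subtype.ext (he''.trans he'.symm)
          rw [this]
          exact hcontra
      have hmaxψ : q < W.length → ∀ e' : G.edgeSet,
          (e' : Sym2 V) = s(W.getVert q, W.getVert (q+1)) →
          ψ e' ≠ if Even q then a else b := by
        intro hqlt e' he' hcontra
        have hng : ¬ AltPred G ψ W a b (q+1) :=
          Nat.findGreatest_is_greatest (Nat.lt_succ_self q) (by omega)
        apply hng
        intro i hi e'' he''
        rcases Nat.lt_succ_iff_lt_or_eq.mp hi with h | h
        · exact hQψq i h e'' he''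
        · subst h
          have : e'' = e' := Subtype.ext (he''.trans he'.symm)
          rw [this]
          exact hcontra
      rcases le_total p q with hpq | hqp
      · obtain ⟨φ', P', hchg, hφ', hpath', hdisj', hF', hle, hlt⟩ :=
          kempe_step G k φ ψ hφ hψ n P hpath hdisj hF i0 a b p hp1 hpl hQφp
            (fun i hip => hQψq i (lt_of_lt_of_le hip hpq)) hmaxφ
        have hsum' : ∑ i, (P' i).2.2.length ≤ N := by
          have hstrict : ∑ i, (P' i).2.2.length < ∑ i, (P i).2.2.length :=
            Finset.sum_lt_sum (fun i _ => hle i) ⟨i0, Finset.mem_univ _, hlt⟩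
          omega
        exact Relation.ReflTransGen.head hchg
          (IH φ' ψ hφ' hψ P' hpath' hdisj' hF' hsum')
      · obtain ⟨ψ', P', hchg, hψ', hpath', hdisj', hF', hle, hlt⟩ :=
          kempe_step G k ψ φ hψ hφ n P hpath hdisj
            (fun e' => by rw [ne_comm]; exact hF e') i0 b a q hq1 hql hQψq
            (fun i hiq => hQφp i (lt_of_lt_of_le hiq hqp)) hmaxψ
        have hsum' : ∑ i, (P' i).2.2.length ≤ N := by
          have hstrict : ∑ i, (P' i).2.2.length < ∑ i, (P i).2.2.length :=
            Finset.sum_lt_sum (fun i _ => hle i) ⟨i0, Finset.mem_univ _, hlt⟩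
          omega
        have hFflip : ∀ e' : G.edgeSet, φ e' ≠ ψ' e' ↔
            ∃ i, (e' : Sym2 V) ∈ (P' i).2.2.edges := by
          intro e'
          rw [ne_comm]
          exact hF' e'
        exact Relation.ReflTransGen.tail
          (IH φ ψ' hφ hψ' P' hpath' hdisj' hFflip hsum')
          (kempeChange_symm hchg)
end

section
/- Let G be a connected simple graph with maximum degree at most 3 that has at least one vertex of degree at most two. Then all proper 4-edge-colourings of G are Kempe equivalent, i.e. κ_E(G, 4) = 1. -/
open SimpleGraph

namespace KAux
open SimpleGraph
variable {V : Type*}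

lemma mem_of_walk {K : SimpleGraph V} {S : Set V}
    (hS : ∀ x ∈ S, ∀ y, K.Adj x y → y ∈ S) {p r : V} (w : K.Walk p r) (hp : p ∈ S) : r ∈ S := by
  induction w with
  | nil => exact hp
  | cons h _ ih => exact ih (hS _ hp _ h)

lemma mem_of_reach {K : SimpleGraph V} {S : Set V}
    (hS : ∀ x ∈ S, ∀ y, K.Adj x y → y ∈ S) {p r : V} (h : K.Reachable p r) (hp : p ∈ S) :
    r ∈ S := by
  obtain ⟨w⟩ := h; exact mem_of_walk hS w hp

variable {G : SimpleGraph V} {k : ℕ}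

/-- Both endpoints of an `{a,b}`-coloured edge are kempe-adjacent. -/
lemma kempe_adj_of_edge {C : G.edgeSet → Fin k} {a b : Fin k}
    {f : G.edgeSet} (hc : C f = a ∨ C f = b) {x y : V} (hxy : (f : Sym2 V) = s(x, y)) :
    (kempeGraph G C a b).Adj x y := by
  have hadj : G.Adj x y := G.mem_edgeSet.1 (hxy ▸ f.2)
  refine ⟨hadj, ?_⟩
  have : (⟨s(x, y), hadj⟩ : G.edgeSet) = f := Subtype.ext hxy.symm
  rw [this]; exact hc

/-- If an edge is in the Kempe chain, every endpoint of it is reachable from `w`. -/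
lemma reach_of_inChain {C : G.edgeSet → Fin k} {a b : Fin k} {w : V} {f : G.edgeSet}
    (h : InKempeChain G C a b w f) {x : V} (hx : x ∈ (f : Sym2 V)) :
    (kempeGraph G C a b).Reachable w x := by
  obtain ⟨hc, u0, hu0, hr⟩ := h
  obtain ⟨y, hy⟩ := Sym2.mem_iff_exists.1 hu0
  rcases Sym2.mem_iff_exists.1 hx with ⟨z, hz⟩
  have hadj := kempe_adj_of_edge hc hy
  rcases (Sym2.mem_iff (a := x)).1 (hy ▸ hx) with rfl | rfl
  · exact hr
  · exact hr.trans hadj.reachable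

lemma swap_mem {a b t : Fin k} (h : t = a ∨ t = b) :
    Equiv.swap a b t = a ∨ Equiv.swap a b t = b := by
  rcases h with rfl | rfl
  · right; exact Equiv.swap_apply_left _ _
  · left; exact Equiv.swap_apply_right _ _

lemma proper_of_change {φ ψ : G.edgeSet → Fin k}
    (hφ : IsProperEdgeColoring G k φ) (h : KempeChange G k φ ψ) :
    IsProperEdgeColoring G k ψ := by
  obtain ⟨a, b, w, hp⟩ := h
  have key : ∀ e₁ e₂ : G.edgeSet, e₁ ≠ e₂ → (∃ v : V, v ∈ (e₁ : Sym2 V) ∧ v ∈ (e₂ : Sym2 V)) →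
      InKempeChain G φ a b w e₁ → ¬ InKempeChain G φ a b w e₂ → ψ e₁ ≠ ψ e₂ := by
    intro e₁ e₂ hne ⟨v, hv1, hv2⟩ h1 h2
    rw [(hp e₁).1 h1, (hp e₂).2 h2]
    intro heq
    apply h2
    refine ⟨?_, v, hv2, reach_of_inChain h1 hv1⟩
    rw [← heq]
    exact swap_mem h1.1
  intro e₁ e₂ hne hshare
  by_cases h1 : InKempeChain G φ a b w e₁ <;> by_cases h2 : InKempeChain G φ a b w e₂
  · rw [(hp e₁).1 h1, (hp e₂).1 h2]
    exact fun hh => hφ e₁ e₂ hne hshare ((Equiv.swap a b).injective hh)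
  · exact key e₁ e₂ hne hshare h1 h2
  · obtain ⟨v, hv1, hv2⟩ := hshare
    exact (key e₂ e₁ hne.symm ⟨v, hv2, hv1⟩ h2 h1).symm
  · rw [(hp e₁).2 h1, (hp e₂).2 h2]
    exact hφ e₁ e₂ hne hshare

lemma proper_of_equiv {φ ψ : G.edgeSet → Fin k}
    (hφ : IsProperEdgeColoring G k φ) (h : KempeEquiv G k φ ψ) :
    IsProperEdgeColoring G k ψ := by
  induction h with
  | refl => exact hφ
  | tail _ hstep ih => exact proper_of_change ih hstep

end KAux

namespace KDel
open SimpleGraph KAux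
variable {V : Type*} {G : SimpleGraph V}

/-- `G` minus the single edge `e`. -/
def Gd (G : SimpleGraph V) (e : G.edgeSet) : SimpleGraph V := G.deleteEdges {(e : Sym2 V)}

lemma mem_Gd_edge {e : G.edgeSet} {f : Sym2 V} :
    f ∈ (Gd G e).edgeSet ↔ f ∈ G.edgeSet ∧ f ≠ (e : Sym2 V) := by
  rw [Gd, edgeSet_deleteEdges]; rfl

lemma Gd_adj {e : G.edgeSet} {x y : V} :
    (Gd G e).Adj x y ↔ G.Adj x y ∧ s(x, y) ≠ (e : Sym2 V) := by
  rw [Gd, deleteEdges_adj]; rfl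

lemma Gd_le (e : G.edgeSet) : Gd G e ≤ G := deleteEdges_le _

/-- View an edge of `Gd G e` as an edge of `G`. -/
def emb (e : G.edgeSet) (f : (Gd G e).edgeSet) : G.edgeSet := ⟨f.1, (mem_Gd_edge.1 f.2).1⟩

/-- View an edge of `G` other than `e` as an edge of `Gd G e`. -/
def toGd (e : G.edgeSet) (f : G.edgeSet) (h : f ≠ e) : (Gd G e).edgeSet :=
  ⟨f.1, mem_Gd_edge.2 ⟨f.2, fun h' => h (Subtype.ext h')⟩⟩

/-- Restriction of a colouring of `G` to `Gd G e`. -/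
def res (e : G.edgeSet) (C : G.edgeSet → Fin 4) (f : (Gd G e).edgeSet) : Fin 4 := C (emb e f)

open Classical in
/-- Extension of a colouring of `Gd G e` by giving `e` the colour `d`. -/
noncomputable def ext (e : G.edgeSet) (d : Fin 4) (c : (Gd G e).edgeSet → Fin 4)
    (f : G.edgeSet) : Fin 4 :=
  if h : f = e then d else c (toGd e f h)

lemma ext_self (e : G.edgeSet) (d : Fin 4) (c : (Gd G e).edgeSet → Fin 4) :
    ext e d c e = d := by rw [ext, dif_pos rfl]

lemma ext_of_ne (e : G.edgeSet) (d : Fin 4) (c : (Gd G e).edgeSet → Fin 4)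
    {f : G.edgeSet} (h : f ≠ e) : ext e d c f = c (toGd e f h) := by rw [ext, dif_neg h]

lemma emb_toGd (e : G.edgeSet) (f : G.edgeSet) (h : f ≠ e) : emb e (toGd e f h) = f := rfl

lemma res_ext (e : G.edgeSet) (d : Fin 4) (c : (Gd G e).edgeSet → Fin 4) :
    res e (ext e d c) = c := by
  funext f
  have hne : emb e f ≠ e := fun h => (mem_Gd_edge.1 f.2).2 (congrArg Subtype.val h)
  rw [res, ext_of_ne e d c hne]
  rfl

lemma res_toGd (e : G.edgeSet) (C : G.edgeSet → Fin 4) (f : G.edgeSet) (h : f ≠ e) :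
    res e C (toGd e f h) = C f := rfl

lemma res_proper {e : G.edgeSet} {C : G.edgeSet → Fin 4}
    (hC : IsProperEdgeColoring G 4 C) : IsProperEdgeColoring (Gd G e) 4 (res e C) := by
  intro f₁ f₂ hne hshare
  refine hC (emb e f₁) (emb e f₂) (fun h => hne ?_) hshare
  have h' := Subtype.ext_iff.1 h
  have : f₁.1 = f₂.1 := h'
  exact Subtype.ext this

end KDel

namespace KTrans
open SimpleGraph KAux KDel
variable {V : Type*} {G : SimpleGraph V} {e : G.edgeSet} {C : G.edgeSet → Fin 4} {a b : Fin 4}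

lemma Hd_le_H : kempeGraph (Gd G e) (res e C) a b ≤ kempeGraph G C a b := by
  intro x y h
  obtain ⟨h', hc⟩ := h
  exact ⟨(Gd_adj.1 h').1, hc⟩

lemma Hadj_cases {x y : V} (h : (kempeGraph G C a b).Adj x y) :
    s(x, y) = (e : Sym2 V) ∨ (kempeGraph (Gd G e) (res e C) a b).Adj x y := by
  obtain ⟨hadj, hc⟩ := h
  by_cases hx : s(x, y) = (e : Sym2 V)
  · exact Or.inl hx
  · exact Or.inr ⟨Gd_adj.2 ⟨hadj, hx⟩, hc⟩

lemma H_le_Hd (hca : C e ≠ a) (hcb : C e ≠ b) :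
    kempeGraph G C a b ≤ kempeGraph (Gd G e) (res e C) a b := by
  intro x y h
  rcases Hadj_cases h with hx | h'
  · exfalso
    obtain ⟨hadj, hc⟩ := h
    have : (⟨s(x, y), hadj⟩ : G.edgeSet) = e := Subtype.ext hx
    rw [this] at hc
    rcases hc with hc | hc
    exacts [hca hc, hcb hc]
  · exact h'

/-- Case 2a: if neither endpoint of `e` is reachable from `w` in the deleted kempe
graph, reachability from `w` is unaffected by `e`. -/
lemma reach_of_not_reach {u v w : V} (huv : (e : Sym2 V) = s(u, v))
    (hru : ¬ (kempeGraph (Gd G e) (res e C) a b).Reachable w u)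
    (hrv : ¬ (kempeGraph (Gd G e) (res e C) a b).Reachable w v)
    {r : V} (h : (kempeGraph G C a b).Reachable w r) :
    (kempeGraph (Gd G e) (res e C) a b).Reachable w r := by
  refine mem_of_reach (S := {r | (kempeGraph (Gd G e) (res e C) a b).Reachable w r}) ?_ h
    Reachable.rfl
  intro x hx y hadj
  rcases Hadj_cases hadj with hxy | h'
  · exfalso
    have hxmem : x ∈ (e : Sym2 V) := by rw [← hxy]; exact Sym2.mem_mk_left x y
    rw [huv] at hxmem
    rcases Sym2.mem_iff.1 hxmem with rfl | rfl
    exacts [hru hx, hrv hx]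
  · exact hx.trans h'.reachable

/-- Case "+e": if `q`'s other edges avoid the colours `a, b` and `p` is reachable from
`w`, then `G`-reachability from `w` is `Gd`-reachability plus possibly `q`. -/
lemma reach_plus_e {p q w : V} (hpq : (e : Sym2 V) = s(p, q))
    (hq : ∀ f : G.edgeSet, f ≠ e → q ∈ (f : Sym2 V) → ¬ (C f = a ∨ C f = b))
    (hrp : (kempeGraph (Gd G e) (res e C) a b).Reachable w p)
    {r : V} (h : (kempeGraph G C a b).Reachable w r) :
    (kempeGraph (Gd G e) (res e C) a b).Reachable w r ∨ r = q := by
  refine mem_of_reach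
    (S := {r | (kempeGraph (Gd G e) (res e C) a b).Reachable w r ∨ r = q}) ?_ h
    (Or.inl Reachable.rfl)
  intro x hx y hadj
  rcases Hadj_cases hadj with hxy | h'
  · have hpair : (x = p ∧ y = q) ∨ (x = q ∧ y = p) := by
      have := hxy.trans hpq
      exact Sym2.eq_iff.1 this
    rcases hpair with ⟨rfl, rfl⟩ | ⟨rfl, rfl⟩
    · exact Or.inr rfl
    · exact Or.inl hrp
  · rcases hx with hx | rfl
    · exact Or.inl (hx.trans h'.reachable)
    · exfalso
      obtain ⟨hadj', hc⟩ := h'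
      set f' : (Gd G e).edgeSet := ⟨s(x, y), ((Gd G e).mem_edgeSet).2 hadj'⟩ with hf'
      refine hq (emb e f') (fun hh => (mem_Gd_edge.1 f'.2).2 (congrArg Subtype.val hh)) ?_ ?_
      · exact Sym2.mem_mk_left x y
      · exact hc

lemma isolated_Hd {q : V}
    (hq : ∀ f : G.edgeSet, f ≠ e → q ∈ (f : Sym2 V) → ¬ (C f = a ∨ C f = b)) :
    ∀ y, ¬ (kempeGraph (Gd G e) (res e C) a b).Adj q y := by
  intro y h
  obtain ⟨h', hc⟩ := h
  set f' : (Gd G e).edgeSet := ⟨s(q, y), ((Gd G e).mem_edgeSet).2 h'⟩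
  refine hq (emb e f') (fun hh => (mem_Gd_edge.1 f'.2).2 (congrArg Subtype.val hh))
    (Sym2.mem_mk_left q y) hc

lemma eq_of_reach_isolated {K : SimpleGraph V} {x r : V}
    (hiso : ∀ y, ¬ K.Adj x y) (h : K.Reachable x r) : r = x := by
  have : r ∈ ({x} : Set V) := by
    refine mem_of_reach (S := {x}) ?_ h rfl
    intro z hz y hadj
    rw [Set.mem_singleton_iff] at hz
    subst hz
    exact absurd hadj (hiso y)
  exact this
end KTrans

namespace KCon
open SimpleGraph KAux KDel KTrans
variable {V : Type*} {G : SimpleGraph V} {e : G.edgeSet} {C : G.edgeSet → Fin 4}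
  {a b : Fin 4} {w : V}

lemma chain_iff
    (hfwd : ∀ r, (kempeGraph G C a b).Reachable w r →
      (kempeGraph (Gd G e) (res e C) a b).Reachable w r)
    {f : G.edgeSet} (hf : f ≠ e) :
    InKempeChain G C a b w f ↔ InKempeChain (Gd G e) (res e C) a b w (toGd e f hf) := by
  constructor
  · rintro ⟨hc, r, hr, hreach⟩
    exact ⟨hc, r, hr, hfwd r hreach⟩
  · rintro ⟨hc, r, hr, hreach⟩
    exact ⟨hc, r, hr, hreach.mono Hd_le_H⟩

lemma chain_iff_plus {q : V}
    (hq : ∀ f : G.edgeSet, f ≠ e → q ∈ (f : Sym2 V) → ¬ (C f = a ∨ C f = b))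
    (hfwd : ∀ r, (kempeGraph G C a b).Reachable w r →
      (kempeGraph (Gd G e) (res e C) a b).Reachable w r ∨ r = q)
    {f : G.edgeSet} (hf : f ≠ e) :
    InKempeChain G C a b w f ↔ InKempeChain (Gd G e) (res e C) a b w (toGd e f hf) := by
  constructor
  · rintro ⟨hc, r, hr, hreach⟩
    rcases hfwd r hreach with h' | rfl
    · exact ⟨hc, r, hr, h'⟩
    · exact absurd hc (hq f hf hr)
  · rintro ⟨hc, r, hr, hreach⟩
    exact ⟨hc, r, hr, hreach.mono Hd_le_H⟩

lemma con_generic {c₁ : (Gd G e).edgeSet → Fin 4}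
    (hprop : ∀ f', (InKempeChain (Gd G e) (res e C) a b w f' →
        c₁ f' = Equiv.swap a b (res e C f')) ∧
      (¬ InKempeChain (Gd G e) (res e C) a b w f' → c₁ f' = res e C f'))
    (d : Fin 4)
    (hd1 : InKempeChain G C a b w e → d = Equiv.swap a b (C e))
    (hd2 : ¬ InKempeChain G C a b w e → d = C e)
    (hiff : ∀ (f : G.edgeSet) (hf : f ≠ e),
      InKempeChain G C a b w f ↔ InKempeChain (Gd G e) (res e C) a b w (toGd e f hf)) :
    KempeChange G 4 C (ext e d c₁) := by
  refine ⟨a, b, w, fun f => ?_⟩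
  by_cases hf : f = e
  · subst hf
    constructor
    · intro h; rw [ext_self]; exact hd1 h
    · intro h; rw [ext_self]; exact hd2 h
  · constructor
    · intro h
      rw [ext_of_ne e d c₁ hf]
      exact (hprop (toGd e f hf)).1 ((hiff f hf).1 h)
    · intro h
      rw [ext_of_ne e d c₁ hf]
      exact (hprop (toGd e f hf)).2 (fun hh => h ((hiff f hf).2 hh))

/-- Case 1: the colour of `e` is not involved in the change. -/
lemma con1 {c₁ : (Gd G e).edgeSet → Fin 4}
    (hprop : ∀ f', (InKempeChain (Gd G e) (res e C) a b w f' →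
        c₁ f' = Equiv.swap a b (res e C f')) ∧
      (¬ InKempeChain (Gd G e) (res e C) a b w f' → c₁ f' = res e C f'))
    (hca : C e ≠ a) (hcb : C e ≠ b) :
    KempeChange G 4 C (ext e (C e) c₁) := by
  refine con_generic hprop (C e) ?_ (fun _ => rfl) ?_
  · intro h
    exact absurd h.1 (by rintro (h | h) <;> [exact hca h; exact hcb h])
  · intro f hf
    exact chain_iff (fun r hr => hr.mono (H_le_Hd hca hcb)) hf

/-- Case 2a: neither endpoint of `e` is in the component of `w`. -/
lemma con2a {c₁ : (Gd G e).edgeSet → Fin 4} {u v : V} (huv : (e : Sym2 V) = s(u, v))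
    (hprop : ∀ f', (InKempeChain (Gd G e) (res e C) a b w f' →
        c₁ f' = Equiv.swap a b (res e C f')) ∧
      (¬ InKempeChain (Gd G e) (res e C) a b w f' → c₁ f' = res e C f'))
    (hru : ¬ (kempeGraph (Gd G e) (res e C) a b).Reachable w u)
    (hrv : ¬ (kempeGraph (Gd G e) (res e C) a b).Reachable w v) :
    KempeChange G 4 C (ext e (C e) c₁) := by
  refine con_generic hprop (C e) ?_ (fun _ => rfl) ?_
  · intro h
    exfalso
    obtain ⟨hc, r, hr, hreach⟩ := h
    have := reach_of_not_reach huv hru hrv hreach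
    rw [huv] at hr
    rcases Sym2.mem_iff.1 hr with rfl | rfl
    exacts [hru this, hrv this]
  · intro f hf
    exact chain_iff (fun r hr => reach_of_not_reach huv hru hrv hr) hf

/-- Case "+e": `q`'s other edges avoid `a, b`, and the other endpoint `p` is in the
component of `w`; then `e` itself gets swapped. -/
lemma con3 {c₁ : (Gd G e).edgeSet → Fin 4} {p q : V} (hpq : (e : Sym2 V) = s(p, q))
    (hprop : ∀ f', (InKempeChain (Gd G e) (res e C) a b w f' →
        c₁ f' = Equiv.swap a b (res e C f')) ∧
      (¬ InKempeChain (Gd G e) (res e C) a b w f' → c₁ f' = res e C f'))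
    (hq : ∀ f : G.edgeSet, f ≠ e → q ∈ (f : Sym2 V) → ¬ (C f = a ∨ C f = b))
    (hrp : (kempeGraph (Gd G e) (res e C) a b).Reachable w p)
    (hce : C e = a ∨ C e = b) :
    KempeChange G 4 C (ext e (Equiv.swap a b (C e)) c₁) := by
  have hchain : InKempeChain G C a b w e := by
    refine ⟨hce, p, ?_, hrp.mono Hd_le_H⟩
    rw [hpq]; exact Sym2.mem_mk_left p q
  refine con_generic hprop (Equiv.swap a b (C e)) (fun _ => rfl)
    (fun h => absurd hchain h) ?_
  exact fun f hf => chain_iff_plus hq (fun r hr => reach_plus_e hpq hq hrp hr) hf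

/-- Recolouring the single edge `e` with a colour missing at both endpoints is a
Kempe change. -/
lemma con_trivial {u v : V} (huv : (e : Sym2 V) = s(u, v)) {d : Fin 4} (hd : d ≠ C e)
    (hu : ∀ f : G.edgeSet, f ≠ e → u ∈ (f : Sym2 V) → C f ≠ C e ∧ C f ≠ d)
    (hv : ∀ f : G.edgeSet, f ≠ e → v ∈ (f : Sym2 V) → C f ≠ C e ∧ C f ≠ d)
    {C₂ : G.edgeSet → Fin 4} (h2e : C₂ e = d) (h2 : ∀ f : G.edgeSet, f ≠ e → C₂ f = C f) :
    KempeChange G 4 C C₂ := by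
  have hreach : ∀ r, (kempeGraph G C (C e) d).Reachable u r → r = u ∨ r = v := by
    intro r hr
    have : r ∈ ({u, v} : Set V) := by
      refine mem_of_reach (S := {u, v}) ?_ hr (Or.inl rfl)
      intro x hx y hadj
      obtain ⟨hadj', hc⟩ := hadj
      set f₀ : G.edgeSet := ⟨s(x, y), G.mem_edgeSet.2 hadj'⟩ with hf₀
      by_cases hfe : f₀ = e
      · have : s(x, y) = s(u, v) := by rw [← huv]; exact congrArg Subtype.val hfe
        rcases Sym2.eq_iff.1 this with ⟨rfl, rfl⟩ | ⟨rfl, rfl⟩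
        · exact Or.inr rfl
        · exact Or.inl rfl
      · exfalso
        have hxmem : x ∈ (f₀ : Sym2 V) := Sym2.mem_mk_left x y
        rcases hx with rfl | rfl
        · rcases hc with hc | hc
          exacts [(hu f₀ hfe hxmem).1 hc, (hu f₀ hfe hxmem).2 hc]
        · rcases hc with hc | hc
          exacts [(hv f₀ hfe hxmem).1 hc, (hv f₀ hfe hxmem).2 hc]
    exact this
  have hchain : ∀ f : G.edgeSet, InKempeChain G C (C e) d u f ↔ f = e := by
    intro f
    constructor
    · rintro ⟨hc, r, hr, hreach'⟩
      by_contra hfe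
      rcases hreach r hreach' with rfl | rfl
      · rcases hc with hc | hc
        exacts [(hu f hfe hr).1 hc, (hu f hfe hr).2 hc]
      · rcases hc with hc | hc
        exacts [(hv f hfe hr).1 hc, (hv f hfe hr).2 hc]
    · rintro rfl
      refine ⟨Or.inl rfl, u, ?_, Reachable.rfl⟩
      rw [huv]; exact Sym2.mem_mk_left u v
  refine ⟨C e, d, u, fun f => ⟨fun h => ?_, fun h => ?_⟩⟩
  · have hfe := (hchain f).1 h
    subst hfe
    rw [h2e, Equiv.swap_apply_left]
  · exact h2 f (fun hfe => h ((hchain f).2 hfe))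

end KCon

namespace KStep
open SimpleGraph KAux KDel KTrans KCon

lemma fin4_two : ∀ a b : Fin 4, a ≠ b →
    ∃ x y : Fin 4, x ≠ y ∧ x ≠ a ∧ x ≠ b ∧ y ≠ a ∧ y ≠ b := by decide

variable {V : Type*} [Fintype V] {G : SimpleGraph V} [DecidableRel G.Adj]

lemma no_four {u : V} (h : G.degree u ≤ 3) {f1 f2 f3 f4 : G.edgeSet}
    (m1 : u ∈ (f1 : Sym2 V)) (m2 : u ∈ (f2 : Sym2 V)) (m3 : u ∈ (f3 : Sym2 V))
    (m4 : u ∈ (f4 : Sym2 V))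
    (d12 : (f1 : Sym2 V) ≠ f2) (d13 : (f1 : Sym2 V) ≠ f3) (d14 : (f1 : Sym2 V) ≠ f4)
    (d23 : (f2 : Sym2 V) ≠ f3) (d24 : (f2 : Sym2 V) ≠ f4) (d34 : (f3 : Sym2 V) ≠ f4) :
    False := by
  classical
  have hsub : ({(f1 : Sym2 V), (f2 : Sym2 V), (f3 : Sym2 V), (f4 : Sym2 V)} : Finset (Sym2 V)) ⊆ G.incidenceFinset u := by
    intro x hx
    rw [mem_incidenceFinset]
    simp only [Finset.mem_insert, Finset.mem_singleton] at hx
    rcases hx with rfl | rfl | rfl | rfl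
    exacts [⟨f1.2, m1⟩, ⟨f2.2, m2⟩, ⟨f3.2, m3⟩, ⟨f4.2, m4⟩]
  have hcard : ({(f1 : Sym2 V), (f2 : Sym2 V), (f3 : Sym2 V), (f4 : Sym2 V)} : Finset (Sym2 V)).card = 4 := by
    rw [Finset.card_insert_of_notMem (by simp [d12, d13, d14]),
        Finset.card_insert_of_notMem (by simp [d23, d24]),
        Finset.card_insert_of_notMem (by simp [d34]), Finset.card_singleton]
  have hle := Finset.card_le_card hsub
  rw [hcard, card_incidenceFinset_eq_degree] at hle
  omega

lemma no_three {v : V} (h : G.degree v ≤ 2) {f1 f2 f3 : G.edgeSet}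
    (m1 : v ∈ (f1 : Sym2 V)) (m2 : v ∈ (f2 : Sym2 V)) (m3 : v ∈ (f3 : Sym2 V))
    (d12 : (f1 : Sym2 V) ≠ f2) (d13 : (f1 : Sym2 V) ≠ f3) (d23 : (f2 : Sym2 V) ≠ f3) :
    False := by
  classical
  have hsub : ({(f1 : Sym2 V), (f2 : Sym2 V), (f3 : Sym2 V)} : Finset (Sym2 V)) ⊆ G.incidenceFinset v := by
    intro x hx
    rw [mem_incidenceFinset]
    simp only [Finset.mem_insert, Finset.mem_singleton] at hx
    rcases hx with rfl | rfl | rfl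
    exacts [⟨f1.2, m1⟩, ⟨f2.2, m2⟩, ⟨f3.2, m3⟩]
  have hcard : ({(f1 : Sym2 V), (f2 : Sym2 V), (f3 : Sym2 V)} : Finset (Sym2 V)).card = 3 := by
    rw [Finset.card_insert_of_notMem (by simp [d12, d13]),
        Finset.card_insert_of_notMem (by simp [d23]), Finset.card_singleton]
  have hle := Finset.card_le_card hsub
  rw [hcard, card_incidenceFinset_eq_degree] at hle
  omega

/-- The key single-step lifting lemma. -/
lemma stepS (e : G.edgeSet) {u v : V} (huv : (e : Sym2 V) = s(u, v))
    (hu3 : G.degree u ≤ 3) (hv2 : G.degree v ≤ 2)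
    {C : G.edgeSet → Fin 4} (hC : IsProperEdgeColoring G 4 C)
    {c₁ : (Gd G e).edgeSet → Fin 4} (hch : KempeChange (Gd G e) 4 (res e C) c₁) :
    ∃ C₁ : G.edgeSet → Fin 4, KempeEquiv G 4 C C₁ ∧ res e C₁ = c₁ := by
  have humem : u ∈ (e : Sym2 V) := by rw [huv]; exact Sym2.mem_mk_left u v
  have hvmem : v ∈ (e : Sym2 V) := by rw [huv]; exact Sym2.mem_mk_right u v
  obtain ⟨a, b, w, hprop⟩ := hch
  by_cases hab : a = b
  · subst hab
    have hc1 : c₁ = res e C := by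
      funext f'
      by_cases h : InKempeChain (Gd G e) (res e C) a a w f'
      · rw [(hprop f').1 h, Equiv.swap_self]; rfl
      · exact (hprop f').2 h
    exact ⟨C, Relation.ReflTransGen.refl, hc1.symm⟩
  by_cases hce : C e = a ∨ C e = b
  case neg =>
    push_neg at hce
    exact ⟨ext e (C e) c₁, Relation.ReflTransGen.single (con1 hprop hce.1 hce.2),
      res_ext _ _ _⟩
  by_cases hiso_u : ∀ f : G.edgeSet, f ≠ e → u ∈ (f : Sym2 V) → ¬ (C f = a ∨ C f = b)
  · by_cases hru : (kempeGraph (Gd G e) (res e C) a b).Reachable w u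
    · have hiso' := isolated_Hd hiso_u
      have hc1 : c₁ = res e C := by
        funext f'
        refine (hprop f').2 ?_
        rintro ⟨hcol, r, hr, hreach⟩
        have hr_u : r = u := eq_of_reach_isolated hiso' (hru.symm.trans hreach)
        subst hr_u
        exact hiso_u (emb e f')
          (fun hh => (mem_Gd_edge.1 f'.2).2 (congrArg Subtype.val hh)) hr hcol
      exact ⟨C, Relation.ReflTransGen.refl, hc1.symm⟩
    · by_cases hrv : (kempeGraph (Gd G e) (res e C) a b).Reachable w v
      · have hvu : (e : Sym2 V) = s(v, u) := huv.trans Sym2.eq_swap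
        exact ⟨_, Relation.ReflTransGen.single (con3 hvu hprop hiso_u hrv hce),
          res_ext _ _ _⟩
      · exact ⟨_, Relation.ReflTransGen.single (con2a huv hprop hru hrv), res_ext _ _ _⟩
  by_cases hiso_v : ∀ f : G.edgeSet, f ≠ e → v ∈ (f : Sym2 V) → ¬ (C f = a ∨ C f = b)
  · by_cases hrv : (kempeGraph (Gd G e) (res e C) a b).Reachable w v
    · have hiso' := isolated_Hd hiso_v
      have hc1 : c₁ = res e C := by
        funext f'
        refine (hprop f').2 ?_
        rintro ⟨hcol, r, hr, hreach⟩
        have hr_v : r = v := eq_of_reach_isolated hiso' (hrv.symm.trans hreach)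
        subst hr_v
        exact hiso_v (emb e f')
          (fun hh => (mem_Gd_edge.1 f'.2).2 (congrArg Subtype.val hh)) hr hcol
      exact ⟨C, Relation.ReflTransGen.refl, hc1.symm⟩
    · by_cases hru : (kempeGraph (Gd G e) (res e C) a b).Reachable w u
      · exact ⟨_, Relation.ReflTransGen.single (con3 huv hprop hiso_v hru hce),
          res_ext _ _ _⟩
      · exact ⟨_, Relation.ReflTransGen.single (con2a huv hprop hru hrv), res_ext _ _ _⟩
  -- neither endpoint is isolated: find a colour `d ∉ {a,b}` missing at both endpoints
  push_neg at hiso_u hiso_v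
  obtain ⟨fu, hfu_ne, hfu_mem, hfu_col⟩ := hiso_u
  obtain ⟨fv, hfv_ne, hfv_mem, hfv_col⟩ := hiso_v
  have hfu_col' : C fu ≠ C e := hC fu e hfu_ne ⟨u, hfu_mem, humem⟩
  have hfv_col' : C fv ≠ C e := hC fv e hfv_ne ⟨v, hfv_mem, hvmem⟩
  obtain ⟨x, y, hxy, hxa, hxb, hya, hyb⟩ := fin4_two a b hab
  have hnotab : ∀ d : Fin 4, d ≠ a → d ≠ b → d ≠ C e ∧ d ≠ C fu ∧ d ≠ C fv := by
    intro d hda hdb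
    refine ⟨?_, ?_, ?_⟩
    · rcases hce with h | h <;> rw [h] <;> assumption
    · rcases hfu_col with h | h <;> rw [h] <;> assumption
    · rcases hfv_col with h | h <;> rw [h] <;> assumption
  have free_v : ∀ d : Fin 4, d ≠ a → d ≠ b →
      ∀ f : G.edgeSet, f ≠ e → v ∈ (f : Sym2 V) → C f ≠ d := by
    intro d hda hdb f hfe hmem heq
    obtain ⟨hd1, _, hd3⟩ := hnotab d hda hdb
    refine no_three hv2 hvmem hfv_mem hmem ?_ ?_ ?_
    · intro hval; exact hfv_col' (congrArg C (Subtype.ext hval)).symm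
    · intro hval
      exact hd1 ((congrArg C (Subtype.ext hval)) ▸ heq.symm ▸ rfl)
    · intro hval; exact hd3 (heq ▸ (congrArg C (Subtype.ext hval)) ▸ rfl)
  have key : ∃ d : Fin 4, d ≠ a ∧ d ≠ b ∧
      (∀ f : G.edgeSet, f ≠ e → u ∈ (f : Sym2 V) → C f ≠ d) := by
    by_cases hx : ∀ f : G.edgeSet, f ≠ e → u ∈ (f : Sym2 V) → C f ≠ x
    · exact ⟨x, hxa, hxb, hx⟩
    by_cases hy : ∀ f : G.edgeSet, f ≠ e → u ∈ (f : Sym2 V) → C f ≠ y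
    · exact ⟨y, hya, hyb, hy⟩
    exfalso
    push_neg at hx hy
    obtain ⟨gx, hgx_ne, hgx_mem, hgx_col⟩ := hx
    obtain ⟨gy, hgy_ne, hgy_mem, hgy_col⟩ := hy
    obtain ⟨hxe, hxfu, _⟩ := hnotab x hxa hxb
    obtain ⟨hye, hyfu, _⟩ := hnotab y hya hyb
    refine no_four hu3 humem hfu_mem hgx_mem hgy_mem ?_ ?_ ?_ ?_ ?_ ?_ <;>
      intro hval <;> have hcc := congrArg C (Subtype.ext hval)
    · exact hfu_col' hcc.symm
    · exact hxe (hgx_col ▸ hcc ▸ rfl)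
    · exact hye (hgy_col ▸ hcc ▸ rfl)
    · exact hxfu (hgx_col ▸ hcc ▸ rfl)
    · exact hyfu (hgy_col ▸ hcc ▸ rfl)
    · exact hxy (hgx_col ▸ hgy_col ▸ hcc ▸ rfl)
  obtain ⟨d, hda, hdb, hd_u⟩ := key
  obtain ⟨hd_e, _, _⟩ := hnotab d hda hdb
  have hd_v := free_v d hda hdb
  -- step 1: recolour `e` to `d`
  set C₂ : G.edgeSet → Fin 4 := ext e d (res e C) with hC₂
  have h2e : C₂ e = d := ext_self _ _ _
  have h2rest : ∀ f : G.edgeSet, f ≠ e → C₂ f = C f := by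
    intro f hf
    rw [hC₂, ext_of_ne e d (res e C) hf, res_toGd]
  have step1 : KempeChange G 4 C C₂ := by
    refine con_trivial huv hd_e ?_ ?_ h2e h2rest
    · exact fun f hfe hm => ⟨hC f e hfe ⟨u, hm, humem⟩, hd_u f hfe hm⟩
    · exact fun f hfe hm => ⟨hC f e hfe ⟨v, hm, hvmem⟩, hd_v f hfe hm⟩
  -- step 2: now `C₂ e = d ∉ {a,b}`, use case 1
  have hres2 : res e C₂ = res e C := res_ext _ _ _
  have hprop2 : ∀ f', (InKempeChain (Gd G e) (res e C₂) a b w f' →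
      c₁ f' = Equiv.swap a b (res e C₂ f')) ∧
      (¬ InKempeChain (Gd G e) (res e C₂) a b w f' → c₁ f' = res e C₂ f') := by
    rw [hres2]; exact hprop
  have step2 : KempeChange G 4 C₂ (ext e (C₂ e) c₁) :=
    con1 hprop2 (h2e ▸ hda) (h2e ▸ hdb)
  exact ⟨ext e (C₂ e) c₁,
    Relation.ReflTransGen.head step1 (Relation.ReflTransGen.single step2), res_ext _ _ _⟩

end KStep

namespace KMain
open SimpleGraph KAux KDel KTrans KCon KStep
variable {V : Type*} [Fintype V]

lemma lift {G : SimpleGraph V} [DecidableRel G.Adj] (e : G.edgeSet) {u v : V}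
    (huv : (e : Sym2 V) = s(u, v)) (hu3 : G.degree u ≤ 3) (hv2 : G.degree v ≤ 2)
    {c c' : (Gd G e).edgeSet → Fin 4}
    (h : Relation.ReflTransGen (KempeChange (Gd G e) 4) c c')
    {C : G.edgeSet → Fin 4} (hC : IsProperEdgeColoring G 4 C) (hres : res e C = c) :
    ∃ C' : G.edgeSet → Fin 4, KempeEquiv G 4 C C' ∧ res e C' = c' := by
  induction h with
  | refl => exact ⟨C, Relation.ReflTransGen.refl, hres⟩
  | tail hsteps hstep ih =>
    obtain ⟨C₁, hEq, hres1⟩ := ih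
    have hC1 : IsProperEdgeColoring G 4 C₁ := proper_of_equiv hC hEq
    rw [← hres1] at hstep
    obtain ⟨C₂, hEq2, hres2⟩ := stepS e huv hu3 hv2 hC1 hstep
    exact ⟨C₂, hEq.trans hEq2, hres2⟩

lemma degree_mono {G H : SimpleGraph V} [DecidableRel G.Adj] [DecidableRel H.Adj]
    (h : G ≤ H) (x : V) : G.degree x ≤ H.degree x := by
  apply Finset.card_le_card
  intro y hy
  rw [mem_neighborFinset] at *
  exact h hy

lemma reach_del {G : SimpleGraph V} {e : G.edgeSet} {z z₂ : V}
    (hzz : (e : Sym2 V) = s(z, z₂)) {p r : V} (w : G.Walk p r) :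
    (Gd G e).Reachable p r ∨ (Gd G e).Reachable p z ∨ (Gd G e).Reachable p z₂ := by
  induction w with
  | nil => exact Or.inl Reachable.rfl
  | @cons p' x r' hadj w ih =>
    by_cases hx : s(p', x) = (e : Sym2 V)
    · rcases Sym2.eq_iff.1 (hx.trans hzz) with ⟨rfl, rfl⟩ | ⟨rfl, rfl⟩
      · exact Or.inr (Or.inl Reachable.rfl)
      · exact Or.inr (Or.inr Reachable.rfl)
    · have hadj' : (Gd G e).Adj p' x := Gd_adj.2 ⟨hadj, hx⟩
      rcases ih with h | h | h
      · exact Or.inl (hadj'.reachable.trans h)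
      · exact Or.inr (Or.inl (hadj'.reachable.trans h))
      · exact Or.inr (Or.inr (hadj'.reachable.trans h))

lemma main_aux :
    ∀ (n : ℕ) (G : SimpleGraph V) [DecidableRel G.Adj],
      G.edgeSet.ncard ≤ n →
      (∀ x : V, G.degree x ≤ 3) →
      (∀ x : V, ∃ z : V, G.Reachable x z ∧ G.degree z ≤ 2) →
      ∀ φ ψ : G.edgeSet → Fin 4, IsProperEdgeColoring G 4 φ →
        IsProperEdgeColoring G 4 ψ → KempeEquiv G 4 φ ψ := by
  haveI : Finite (Sym2 V) :=
    Finite.of_surjective (fun p : V × V => s(p.1, p.2))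
      (fun z => Sym2.ind (fun x y => ⟨(x, y), rfl⟩) z)
  classical
  intro n
  induction n using Nat.strong_induction_on with
  | _ n ih =>
  intro G instG hn hΔ hlow φ ψ hφ hψ
  by_cases hE : G.edgeSet = ∅
  · have : φ = ψ :=
      funext fun f => absurd f.2 (Set.eq_empty_iff_forall_notMem.1 hE f.1)
    rw [this]
    exact Relation.ReflTransGen.refl
  -- find an edge incident to a vertex of degree ≤ 2
  obtain ⟨e0, he0⟩ := Set.nonempty_iff_ne_empty.2 hE
  obtain ⟨x, y, rfl⟩ : ∃ x y, e0 = s(x, y) := by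
    induction e0 using Sym2.ind with
    | _ x y => exact ⟨x, y, rfl⟩
  have hxy : G.Adj x y := G.mem_edgeSet.1 he0
  obtain ⟨z, hxz, hz2⟩ := hlow x
  have hznbr : ∃ z₂ : V, G.Adj z z₂ := by
    obtain ⟨w0⟩ := hxz.symm
    cases w0 with
    | nil => exact ⟨y, hxy⟩
    | cons hadj _ => exact ⟨_, hadj⟩
  obtain ⟨z₂, hadj⟩ := hznbr
  set e : G.edgeSet := ⟨s(z, z₂), G.mem_edgeSet.2 hadj⟩ with he_def
  have hzz : (e : Sym2 V) = s(z, z₂) := rfl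
  have huv : (e : Sym2 V) = s(z₂, z) := Sym2.eq_swap
  letI instGd : DecidableRel (Gd G e).Adj := fun p q => Classical.dec _
  -- degree facts
  have hu3 : G.degree z₂ ≤ 3 := hΔ z₂
  have hdegGd : ∀ p : V, (Gd G e).degree p ≤ G.degree p :=
    fun p => degree_mono (Gd_le e) p
  have hz₂2 : (Gd G e).degree z₂ ≤ 2 := by
    have hsub : (Gd G e).neighborFinset z₂ ⊆ (G.neighborFinset z₂).erase z := by
      intro q hq
      rw [mem_neighborFinset] at hq
      rw [Finset.mem_erase, mem_neighborFinset]
      obtain ⟨hq1, hq2⟩ := Gd_adj.1 hq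
      refine ⟨fun hqz => ?_, hq1⟩
      subst hqz
      exact hq2 (hzz.trans Sym2.eq_swap).symm
    have := Finset.card_le_card hsub
    rw [Finset.card_erase_of_mem (by rw [mem_neighborFinset]; exact hadj.symm)] at this
    have hd := hΔ z₂
    rw [SimpleGraph.degree] at *
    omega
  -- smaller edge count
  have hlt : (Gd G e).edgeSet.ncard < G.edgeSet.ncard := by
    apply Set.ncard_lt_ncard
    · rw [Gd, edgeSet_deleteEdges]
      constructor
      · exact Set.diff_subset
      · intro hsub
        have := hsub e.2
        exact this.2 rfl
    · exact Set.toFinite _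
  have hpos : 0 < G.edgeSet.ncard := by
    rw [Set.ncard_pos (Set.toFinite _)]
    exact ⟨s(x, y), he0⟩
  -- hypotheses for the deleted graph
  have hΔ' : ∀ p : V, (Gd G e).degree p ≤ 3 := fun p => (hdegGd p).trans (hΔ p)
  have hlow' : ∀ p : V, ∃ q : V, (Gd G e).Reachable p q ∧ (Gd G e).degree q ≤ 2 := by
    intro p
    obtain ⟨z0, hpz0, hz02⟩ := hlow p
    obtain ⟨w0⟩ := hpz0
    rcases reach_del hzz w0 with h | h | h
    · exact ⟨z0, h, (hdegGd z0).trans hz02⟩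
    · exact ⟨z, h, (hdegGd z).trans hz2⟩
    · exact ⟨z₂, h, hz₂2⟩
  -- induction
  have hIH := ih (n - 1) (by omega) (Gd G e) (by omega) hΔ' hlow'
    (res e φ) (res e ψ) (res_proper hφ) (res_proper hψ)
  obtain ⟨φ', hEq, hres⟩ := lift e huv hu3 hz2 hIH hφ rfl
  have hφ' : IsProperEdgeColoring G 4 φ' := proper_of_equiv hφ hEq
  have hagree : ∀ (f : G.edgeSet) (hf : f ≠ e), φ' f = ψ f := by
    intro f hf
    have h1 : res e φ' (toGd e f hf) = res e ψ (toGd e f hf) := by rw [hres]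
    exact h1
  have humem : z₂ ∈ (e : Sym2 V) := by rw [huv]; exact Sym2.mem_mk_left z₂ z
  have hvmem : z ∈ (e : Sym2 V) := by rw [huv]; exact Sym2.mem_mk_right z₂ z
  by_cases heq : φ' e = ψ e
  · have : φ' = ψ := by
      funext f
      by_cases hf : f = e
      · rw [hf]; exact heq
      · exact hagree f hf
    rw [← this]
    exact hEq
  · have hlast : KempeChange G 4 φ' ψ := by
      refine con_trivial huv (fun h => heq h.symm) ?_ ?_ rfl (fun f hf => (hagree f hf).symm)
      · intro f hfe hm
        refine ⟨hφ' f e hfe ⟨z₂, hm, humem⟩, ?_⟩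
        rw [hagree f hfe]
        exact hψ f e hfe ⟨z₂, hm, humem⟩
      · intro f hfe hm
        refine ⟨hφ' f e hfe ⟨z, hm, hvmem⟩, ?_⟩
        rw [hagree f hfe]
        exact hψ f e hfe ⟨z, hm, hvmem⟩
    exact hEq.tail hlast

end KMain


/-- **Lemma (non-regular subcubic).** If `G` is a connected simple graph with maximum
degree at most 3 having a vertex of degree at most two, then all proper
4-edge-colourings of `G` are Kempe equivalent, i.e. `κ_E(G, 4) = 1`. -/
theorem kempe_equiv_four_of_subcubic_nonregular {V : Type*} [Fintype V]
    (G : SimpleGraph V) [DecidableRel G.Adj] (hconn : G.Connected)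
    (hΔ : ∀ u : V, G.degree u ≤ 3) (v : V) (hv : G.degree v ≤ 2)
    (φ ψ : G.edgeSet → Fin 4)
    (hφ : IsProperEdgeColoring G 4 φ) (hψ : IsProperEdgeColoring G 4 ψ) :
    KempeEquiv G 4 φ ψ := by
  exact KMain.main_aux G.edgeSet.ncard G le_rfl hΔ
    (fun x => ⟨v, hconn.preconnected x v, hv⟩) φ ψ hφ hψ
end

section
/- Let G be a connected simple graph with maximum degree at most 4 in which no two vertices of degree four are adjacent. Suppose there exists a vertex v of G satisfying either (a) deg(v) ≤ 2, or (b) deg(v) = 3 and v has at most two neighbours of degree four. Then all proper 5-edge-colourings of G are Kempe equivalent, i.e. κ_E(G, 5) = 1. -/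
open SimpleGraph

section Helpers

variable {V : Type*}

lemma reach_closed {H : SimpleGraph V} {S : Set V} (hS : ∀ x ∈ S, ∀ y, H.Adj x y → y ∈ S)
    {x z : V} (h : H.Reachable x z) : x ∈ S → z ∈ S := by
  obtain ⟨W⟩ := h
  induction W with
  | nil => exact id
  | cons h p ih => exact fun hx => ih (hS _ hx _ h)

lemma reach_add {H H' : SimpleGraph V} {u v : V}
    (hstep : ∀ x y, H.Adj x y → H'.Adj x y ∨ s(x, y) = s(u, v)) :
    ∀ {w z : V}, H.Reachable w z →
      H'.Reachable w z ∨ (H'.Reachable w u ∧ H'.Reachable v z) ∨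
        (H'.Reachable w v ∧ H'.Reachable u z) := by
  intro w z h
  obtain ⟨W⟩ := h
  induction W with
  | nil => exact Or.inl (SimpleGraph.Reachable.refl _)
  | cons h W ih =>
      rcases hstep _ _ h with h' | he
      · rcases ih with h1 | ⟨h2, h3⟩ | ⟨h2, h3⟩
        · exact Or.inl ((h'.reachable).trans h1)
        · exact Or.inr (Or.inl ⟨(h'.reachable).trans h2, h3⟩)
        · exact Or.inr (Or.inr ⟨(h'.reachable).trans h2, h3⟩)
      · rw [Sym2.eq_iff] at he
        rcases he with ⟨hp, hq⟩ | ⟨hp, hq⟩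
        · subst hp; subst hq
          rcases ih with h1 | ⟨h2, h3⟩ | ⟨h2, h3⟩
          · exact Or.inr (Or.inl ⟨SimpleGraph.Reachable.refl _, h1⟩)
          · exact Or.inr (Or.inl ⟨SimpleGraph.Reachable.refl _, h3⟩)
          · exact Or.inl h3
        · subst hp; subst hq
          rcases ih with h1 | ⟨h2, h3⟩ | ⟨h2, h3⟩
          · exact Or.inr (Or.inr ⟨SimpleGraph.Reachable.refl _, h1⟩)
          · exact Or.inl h3
          · exact Or.inr (Or.inr ⟨SimpleGraph.Reachable.refl _, h3⟩)

lemma edge_cases {G : SimpleGraph V} (f : G.edgeSet) :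
    ∃ (p q : V) (h : G.Adj p q), f = ⟨s(p, q), h⟩ := by
  rcases f with ⟨e, he⟩
  revert he
  induction e using Sym2.ind with
  | _ p q => exact fun he => ⟨p, q, he, rfl⟩

end Helpers
section Swap

variable {V : Type*} {k : ℕ}

/-- The result of performing a Kempe change on `α`. -/
noncomputable def swapAt (G : SimpleGraph V) (α : G.edgeSet → Fin k) (a b : Fin k) (w : V) :
    G.edgeSet → Fin k := fun f =>
  @ite _ (InKempeChain G α a b w f) (Classical.dec _) (Equiv.swap a b (α f)) (α f)

lemma swapAt_pos {G : SimpleGraph V} {α : G.edgeSet → Fin k} {a b : Fin k} {w : V}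
    {f : G.edgeSet} (h : InKempeChain G α a b w f) :
    swapAt G α a b w f = Equiv.swap a b (α f) := by
  unfold swapAt; exact if_pos h

lemma swapAt_neg {G : SimpleGraph V} {α : G.edgeSet → Fin k} {a b : Fin k} {w : V}
    {f : G.edgeSet} (h : ¬ InKempeChain G α a b w f) :
    swapAt G α a b w f = α f := by
  unfold swapAt; exact if_neg h

lemma kempeChange_swapAt (G : SimpleGraph V) (α : G.edgeSet → Fin k) (a b : Fin k) (w : V) :
    KempeChange G k α (swapAt G α a b w) :=
  ⟨a, b, w, fun _ => ⟨fun h => swapAt_pos h, fun h => swapAt_neg h⟩⟩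

lemma chain_reach_of_mem {G : SimpleGraph V} {α : G.edgeSet → Fin k} {a b : Fin k} {w : V}
    {f : G.edgeSet} (hf : InKempeChain G α a b w f) {z : V} (hz : z ∈ (f : Sym2 V)) :
    (kempeGraph G α a b).Reachable w z := by
  obtain ⟨p, q, hpq, rfl⟩ := edge_cases f
  obtain ⟨hcol, y, hy, hr⟩ := hf
  have hadj : (kempeGraph G α a b).Adj p q := ⟨hpq, hcol⟩
  rw [Sym2.mem_iff] at hz hy
  rcases hy with rfl | rfl <;> rcases hz with rfl | rfl
  · exact hr
  · exact hr.trans hadj.reachable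
  · exact hr.trans hadj.symm.reachable
  · exact hr

lemma proper_swapAt {G : SimpleGraph V} {α : G.edgeSet → Fin k} {a b : Fin k} {w : V}
    (hα : IsProperEdgeColoring G k α) :
    IsProperEdgeColoring G k (swapAt G α a b w) := by
  intro e₁ e₂ hne hshare
  obtain ⟨z, hz1, hz2⟩ := hshare
  have hbase : α e₁ ≠ α e₂ := hα e₁ e₂ hne ⟨z, hz1, hz2⟩
  by_cases h1 : InKempeChain G α a b w e₁ <;> by_cases h2 : InKempeChain G α a b w e₂
  · rw [swapAt_pos h1, swapAt_pos h2]
    exact fun hc => hbase ((Equiv.swap a b).injective hc)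
  · have hcol2 : ¬(α e₂ = a ∨ α e₂ = b) := fun hcol =>
      h2 ⟨hcol, z, hz2, chain_reach_of_mem h1 hz1⟩
    rw [swapAt_pos h1, swapAt_neg h2]
    rcases h1.1 with h | h <;> rw [h]
    · rw [Equiv.swap_apply_left]; exact fun hc => hcol2 (Or.inr hc.symm)
    · rw [Equiv.swap_apply_right]; exact fun hc => hcol2 (Or.inl hc.symm)
  · have hcol1 : ¬(α e₁ = a ∨ α e₁ = b) := fun hcol =>
      h1 ⟨hcol, z, hz1, chain_reach_of_mem h2 hz2⟩
    rw [swapAt_neg h1, swapAt_pos h2]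
    rcases h2.1 with h | h <;> rw [h]
    · rw [Equiv.swap_apply_left]; exact fun hc => hcol1 (Or.inr hc)
    · rw [Equiv.swap_apply_right]; exact fun hc => hcol1 (Or.inl hc)
  · rw [swapAt_neg h1, swapAt_neg h2]; exact hbase

end Swap
section Single

variable {V : Type*} [DecidableEq V] {k : ℕ} {G : SimpleGraph V} {α : G.edgeSet → Fin k}
  {p q : V} {hpq : G.Adj p q} {c : Fin k}

lemma singleChain (hα : IsProperEdgeColoring G k α)
    (hmu : ∀ f : G.edgeSet, f ≠ ⟨s(p, q), hpq⟩ → p ∈ (f : Sym2 V) → α f ≠ c)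
    (hmv : ∀ f : G.edgeSet, f ≠ ⟨s(p, q), hpq⟩ → q ∈ (f : Sym2 V) → α f ≠ c)
    (f : G.edgeSet) :
    InKempeChain G α (α ⟨s(p, q), hpq⟩) c p f ↔ f = ⟨s(p, q), hpq⟩ := by
  set eS : G.edgeSet := ⟨s(p, q), hpq⟩ with heS
  have hclosed : ∀ x ∈ ({p, q} : Set V), ∀ y,
      (kempeGraph G α (α eS) c).Adj x y → y ∈ ({p, q} : Set V) := by
    rintro x hx y ⟨hG, hcol⟩
    by_cases hg : (⟨s(x, y), hG⟩ : G.edgeSet) = eS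
    · have hval : s(x, y) = s(p, q) := congrArg Subtype.val hg
      rw [Sym2.eq_iff] at hval
      rcases hval with ⟨_, rfl⟩ | ⟨_, rfl⟩
      · exact Or.inr rfl
      · exact Or.inl rfl
    · exfalso
      have hxe : x ∈ ((⟨s(x, y), hG⟩ : G.edgeSet) : Sym2 V) := Sym2.mem_mk_left x y
      have hne1 : α ⟨s(x, y), hG⟩ ≠ α eS := by
        refine hα _ _ hg ⟨x, hxe, ?_⟩
        rcases hx with rfl | rfl
        · exact Sym2.mem_mk_left x q
        · exact Sym2.mem_mk_right p x
      have hne2 : α ⟨s(x, y), hG⟩ ≠ c := by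
        rcases hx with rfl | rfl
        · exact hmu _ hg hxe
        · exact hmv _ hg hxe
      rcases hcol with h | h
      · exact hne1 h
      · exact hne2 h
  constructor
  · rintro ⟨hcol, z, hzf, hr⟩
    have hz : z ∈ ({p, q} : Set V) := reach_closed hclosed hr (Or.inl rfl)
    by_contra hne
    have hne1 : α f ≠ α eS := by
      refine hα _ _ hne ⟨z, hzf, ?_⟩
      rcases hz with rfl | rfl
      · exact Sym2.mem_mk_left z q
      · exact Sym2.mem_mk_right p z
    have hne2 : α f ≠ c := by
      rcases hz with rfl | rfl
      · exact hmu _ hne hzf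
      · exact hmv _ hne hzf
    rcases hcol with h | h
    · exact hne1 h
    · exact hne2 h
  · rintro rfl
    exact ⟨Or.inl rfl, p, Sym2.mem_mk_left p q, SimpleGraph.Reachable.refl _⟩

lemma kempeChange_update (hα : IsProperEdgeColoring G k α)
    (hmu : ∀ f : G.edgeSet, f ≠ ⟨s(p, q), hpq⟩ → p ∈ (f : Sym2 V) → α f ≠ c)
    (hmv : ∀ f : G.edgeSet, f ≠ ⟨s(p, q), hpq⟩ → q ∈ (f : Sym2 V) → α f ≠ c) :
    KempeChange G k α (Function.update α ⟨s(p, q), hpq⟩ c) := by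
  refine ⟨α ⟨s(p, q), hpq⟩, c, p, fun f => ⟨fun h => ?_, fun h => ?_⟩⟩
  · have hf : f = ⟨s(p, q), hpq⟩ := (singleChain hα hmu hmv f).1 h
    subst hf
    rw [Function.update_self, Equiv.swap_apply_left]
  · have hf : f ≠ ⟨s(p, q), hpq⟩ := fun hf => h ((singleChain hα hmu hmv f).2 hf)
    rw [Function.update_of_ne hf]

lemma proper_update (hα : IsProperEdgeColoring G k α) (hc : c ≠ α ⟨s(p, q), hpq⟩)
    (hmu : ∀ f : G.edgeSet, f ≠ ⟨s(p, q), hpq⟩ → p ∈ (f : Sym2 V) → α f ≠ c)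
    (hmv : ∀ f : G.edgeSet, f ≠ ⟨s(p, q), hpq⟩ → q ∈ (f : Sym2 V) → α f ≠ c) :
    IsProperEdgeColoring G k (Function.update α ⟨s(p, q), hpq⟩ c) := by
  intro e₁ e₂ hne hshare
  obtain ⟨z, hz1, hz2⟩ := hshare
  set eS : G.edgeSet := ⟨s(p, q), hpq⟩ with heS
  by_cases h1 : e₁ = eS <;> by_cases h2 : e₂ = eS
  · exact absurd (h1.trans h2.symm) hne
  · subst h1
    rw [Function.update_self, Function.update_of_ne h2]
    have : z ∈ ({p, q} : Set V) := by
      have : z ∈ s(p, q) := hz1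
      rwa [Sym2.mem_iff] at this
      
    rcases this with rfl | rfl
    · exact fun hcc => hmu _ h2 hz2 hcc.symm
    · exact fun hcc => hmv _ h2 hz2 hcc.symm
  · subst h2
    rw [Function.update_self, Function.update_of_ne h1]
    have : z ∈ ({p, q} : Set V) := by
      have : z ∈ s(p, q) := hz2
      rwa [Sym2.mem_iff] at this
    rcases this with rfl | rfl
    · exact hmu _ h1 hz1
    · exact hmv _ h1 hz1
  · rw [Function.update_of_ne h1, Function.update_of_ne h2]
    exact hα _ _ hne ⟨z, hz1, hz2⟩

end Single
section Restrict

variable {V : Type*}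

/-- `G` minus the edge `uv`. -/
def Gd (G : SimpleGraph V) (u v : V) : SimpleGraph V := G.deleteEdges {s(u, v)}

lemma Gd_adj {G : SimpleGraph V} {u v x y : V} :
    (Gd G u v).Adj x y ↔ G.Adj x y ∧ s(x, y) ≠ s(u, v) := by
  simp [Gd, SimpleGraph.deleteEdges_adj]

lemma Gd_le {G : SimpleGraph V} {u v : V} : Gd G u v ≤ G :=
  fun _ _ h => (Gd_adj.1 h).1

def ρ {G : SimpleGraph V} {u v : V} (f : (Gd G u v).edgeSet) : G.edgeSet :=
  ⟨f.1, by
    have h2 := f.2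
    simp only [Gd, SimpleGraph.edgeSet_deleteEdges] at h2
    exact h2.1⟩

lemma rho_val {G : SimpleGraph V} {u v : V} (f : (Gd G u v).edgeSet) :
    ((ρ f : G.edgeSet) : Sym2 V) = (f : Sym2 V) := rfl

lemma rho_ne {G : SimpleGraph V} {u v : V} (f : (Gd G u v).edgeSet) {h : G.Adj u v} :
    ρ f ≠ (⟨s(u, v), h⟩ : G.edgeSet) := by
  intro hh
  have h2 := f.2
  simp only [Gd, SimpleGraph.edgeSet_deleteEdges, Set.mem_diff] at h2
  exact h2.2 (by simpa [rho_val] using congrArg Subtype.val hh)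

lemma rho_inj {G : SimpleGraph V} {u v : V} {f₁ f₂ : (Gd G u v).edgeSet}
    (h : f₁ ≠ f₂) : ρ f₁ ≠ ρ f₂ := fun hh => by
  apply h
  apply Subtype.ext
  have h2 := congrArg Subtype.val hh
  exact h2

lemma proper_restrict {k : ℕ} {G : SimpleGraph V} {u v : V} {α : G.edgeSet → Fin k}
    (hα : IsProperEdgeColoring G k α) :
    IsProperEdgeColoring (Gd G u v) k (α ∘ ρ) := by
  intro e₁ e₂ hne ⟨z, hz1, hz2⟩
  exact hα _ _ (rho_inj hne) ⟨z, hz1, hz2⟩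

variable {k : ℕ} {G : SimpleGraph V} {u v : V} {α : G.edgeSet → Fin k} {a b : Fin k}

lemma kempe_mono :
    kempeGraph (Gd G u v) (α ∘ ρ) a b ≤ kempeGraph G α a b := by
  rintro x y ⟨h', hcol⟩
  refine ⟨(Gd_adj.1 h').1, ?_⟩
  have : (⟨s(x, y), (Gd_adj.1 h').1⟩ : G.edgeSet) = ρ ⟨s(x, y), h'⟩ := Subtype.ext rfl
  rw [this]
  exact hcol

lemma kempe_step_s6 {x y : V} (h : (kempeGraph G α a b).Adj x y) :
    (kempeGraph (Gd G u v) (α ∘ ρ) a b).Adj x y ∨ s(x, y) = s(u, v) := by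
  obtain ⟨hG, hcol⟩ := h
  by_cases he : s(x, y) = s(u, v)
  · exact Or.inr he
  · refine Or.inl ⟨Gd_adj.2 ⟨hG, he⟩, ?_⟩
    have : ρ (⟨s(x, y), Gd_adj.2 ⟨hG, he⟩⟩ : (Gd G u v).edgeSet)
        = (⟨s(x, y), hG⟩ : G.edgeSet) := Subtype.ext rfl
    show (α ∘ ρ) _ = a ∨ (α ∘ ρ) _ = b
    rw [Function.comp_apply, this]
    exact hcol

lemma kempe_eq_of_not {h : G.Adj u v} (hcol : ¬(α ⟨s(u, v), h⟩ = a ∨ α ⟨s(u, v), h⟩ = b)) :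
    kempeGraph G α a b = kempeGraph (Gd G u v) (α ∘ ρ) a b := by
  ext x y
  constructor
  · intro hadj
    rcases kempe_step_s6 hadj with h' | he
    · exact h'
    · exfalso
      obtain ⟨hG, hc⟩ := hadj
      have : (⟨s(x, y), hG⟩ : G.edgeSet) = ⟨s(u, v), h⟩ := Subtype.ext he
      rw [this] at hc
      exact hcol hc
  · intro h'
    exact kempe_mono h'

lemma inchain_iff_S0 {h : G.Adj u v} (hcol : ¬(α ⟨s(u, v), h⟩ = a ∨ α ⟨s(u, v), h⟩ = b))
    (w : V) (f' : (Gd G u v).edgeSet) :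
    InKempeChain G α a b w (ρ f') ↔ InKempeChain (Gd G u v) (α ∘ ρ) a b w f' := by
  unfold InKempeChain
  rw [kempe_eq_of_not hcol]
  rfl

end Restrict
section Pendant

variable {V : Type*} {k : ℕ} {G : SimpleGraph V} {u v : V} {α : G.edgeSet → Fin k}
  {a b : Fin k} {huv : G.Adj u v} {x y : V}

lemma iso_not_adj (hiso : ∀ f : G.edgeSet, f ≠ ⟨s(u, v), huv⟩ → x ∈ (f : Sym2 V) →
      ¬(α f = a ∨ α f = b)) :
    ∀ z, ¬ (kempeGraph (Gd G u v) (α ∘ ρ) a b).Adj x z := by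
  rintro z ⟨h', hcol⟩
  exact hiso (ρ ⟨s(x, z), h'⟩) (rho_ne _) (Sym2.mem_mk_left x z) hcol

lemma iso_reach (hiso : ∀ f : G.edgeSet, f ≠ ⟨s(u, v), huv⟩ → x ∈ (f : Sym2 V) →
      ¬(α f = a ∨ α f = b)) {z : V}
    (hr : (kempeGraph (Gd G u v) (α ∘ ρ) a b).Reachable x z) : z = x := by
  have hcl : ∀ p ∈ ({x} : Set V), ∀ q,
      (kempeGraph (Gd G u v) (α ∘ ρ) a b).Adj p q → q ∈ ({x} : Set V) := by
    rintro p rfl q hadj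
    exact absurd hadj (iso_not_adj hiso q)
  exact reach_closed hcl hr rfl

lemma S1a (hiso : ∀ f : G.edgeSet, f ≠ ⟨s(u, v), huv⟩ → x ∈ (f : Sym2 V) →
      ¬(α f = a ∨ α f = b)) (f' : (Gd G u v).edgeSet) :
    ¬ InKempeChain (Gd G u v) (α ∘ ρ) a b x f' := by
  rintro ⟨hcol, z, hz, hr⟩
  have hzx := iso_reach hiso hr
  subst hzx
  exact hiso (ρ f') (rho_ne _) hz hcol

lemma S1b (hxy : s(x, y) = s(u, v))
    (hiso : ∀ f : G.edgeSet, f ≠ ⟨s(u, v), huv⟩ → x ∈ (f : Sym2 V) →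
      ¬(α f = a ∨ α f = b))
    {w : V} (hw : w ≠ x) (f' : (Gd G u v).edgeSet) :
    InKempeChain G α a b w (ρ f') ↔ InKempeChain (Gd G u v) (α ∘ ρ) a b w f' := by
  constructor
  · rintro ⟨hcol, z, hz, hr⟩
    refine ⟨hcol, z, hz, ?_⟩
    have hstep : ∀ p q, (kempeGraph G α a b).Adj p q →
        (kempeGraph (Gd G u v) (α ∘ ρ) a b).Adj p q ∨ s(p, q) = s(x, y) := by
      intro p q h
      rcases kempe_step_s6 h with h' | h'
      · exact Or.inl h'
      · exact Or.inr (h'.trans hxy.symm)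
    rcases reach_add hstep hr with h1 | ⟨h2, h3⟩ | ⟨h2, h3⟩
    · exact h1
    · exact absurd (iso_reach hiso h2.symm) hw
    · exfalso
      have hzx := iso_reach hiso h3
      subst hzx
      exact hiso (ρ f') (rho_ne _) hz hcol
  · rintro ⟨hcol, z, hz, hr⟩
    exact ⟨hcol, z, hz, hr.mono kempe_mono⟩

end Pendant
section Counting

open Finset

variable {V : Type*} [Fintype V] [DecidableEq V] {k : ℕ}

/-- Colours missing at `x` among edges other than `eS`. -/
noncomputable def missedF (G : SimpleGraph V) (α : G.edgeSet → Fin k) (eS : G.edgeSet)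
    (x : V) : Finset (Fin k) :=
  @Finset.filter _ (fun c => ∀ f : G.edgeSet, f ≠ eS → x ∈ (f : Sym2 V) → α f ≠ c)
    (Classical.decPred _) Finset.univ

lemma mem_missedF {G : SimpleGraph V} {α : G.edgeSet → Fin k} {eS : G.edgeSet} {x : V}
    {c : Fin k} :
    c ∈ missedF G α eS x ↔ ∀ f : G.edgeSet, f ≠ eS → x ∈ (f : Sym2 V) → α f ≠ c := by
  unfold missedF
  rw [@Finset.mem_filter _ _ (Classical.decPred _) _ _]
  simp

lemma card_missedF {G : SimpleGraph V} [DecidableRel G.Adj] {α : G.edgeSet → Fin k}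
    {eS : G.edgeSet} {x : V} (hx : x ∈ (eS : Sym2 V)) :
    k + 1 ≤ G.degree x + (missedF G α eS x).card := by
  classical
  set M := missedF G α eS x with hM
  set C := (Finset.univ : Finset (Fin k)) \ M with hC
  have hCM : C.card + M.card = k := by
    have h1 := Finset.card_sdiff_add_card_eq_card (Finset.subset_univ M)
    simpa using h1
  have hwit : ∀ c ∈ C, ∃ f : G.edgeSet, f ≠ eS ∧ x ∈ (f : Sym2 V) ∧ α f = c := by
    intro c hc
    rw [hC, Finset.mem_sdiff] at hc
    have := hc.2
    rw [hM, mem_missedF] at this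
    push_neg at this
    exact this
  choose wit hw1 hw2 hw3 using hwit
  have heSmem : (eS : Sym2 V) ∈ G.incidenceFinset x := by
    rw [SimpleGraph.mem_incidenceFinset]
    exact ⟨eS.2, hx⟩
  have hinj : ∀ c (hc : c ∈ C), ∀ c' (hc' : c' ∈ C),
      (wit c hc : G.edgeSet).val = (wit c' hc').val → c = c' := by
    intro c hc c' hc' hval
    have : wit c hc = wit c' hc' := Subtype.ext hval
    rw [← hw3 c hc, ← hw3 c' hc', this]
  have hmaps : ∀ c (hc : c ∈ C), (wit c hc).val ∈ (G.incidenceFinset x).erase (eS : Sym2 V) := by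
    intro c hc
    rw [Finset.mem_erase]
    refine ⟨fun hval => hw1 c hc (Subtype.ext hval), ?_⟩
    rw [SimpleGraph.mem_incidenceFinset]
    exact ⟨(wit c hc).2, hw2 c hc⟩
  have hcard : C.card ≤ ((G.incidenceFinset x).erase (eS : Sym2 V)).card := by
    apply Finset.card_le_card_of_injOn (fun c => if hc : c ∈ C then (wit c hc).val else (eS : Sym2 V))
    · intro c hc
      simp only [Finset.mem_coe] at hc ⊢
      simp only [dif_pos hc]
      exact hmaps c hc
    · intro c hc c' hc' h
      simp only [Finset.mem_coe] at hc hc'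
      simp only [dif_pos hc, dif_pos hc'] at h
      exact hinj c hc c' hc' h
  rw [Finset.card_erase_of_mem heSmem, SimpleGraph.card_incidenceFinset_eq_degree] at hcard
  have hdeg : 1 ≤ G.degree x := by
    have h0 : 0 < (G.incidenceFinset x).card := Finset.card_pos.2 ⟨_, heSmem⟩
    rwa [SimpleGraph.card_incidenceFinset_eq_degree] at h0
  omega

end Counting
section Lift

open Finset

variable {V : Type*} [Fintype V] [DecidableEq V]

lemma kempeGraph_comm {k : ℕ} {G : SimpleGraph V} {φ : G.edgeSet → Fin k} {a b : Fin k} :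
    kempeGraph G φ a b = kempeGraph G φ b a := by
  ext x y
  constructor <;> rintro ⟨h, hc⟩ <;> exact ⟨h, Or.symm hc⟩

lemma inchain_comm {k : ℕ} {G : SimpleGraph V} {φ : G.edgeSet → Fin k} {a b : Fin k}
    {w : V} {e : G.edgeSet} :
    InKempeChain G φ a b w e ↔ InKempeChain G φ b a w e := by
  unfold InKempeChain
  rw [kempeGraph_comm]
  constructor <;> rintro ⟨hc, hrest⟩ <;> exact ⟨Or.symm hc, hrest⟩

private lemma match_of_iff {G : SimpleGraph V} {u v : V} {α₂ : G.edgeSet → Fin 5}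
    {α' : (Gd G u v).edgeSet → Fin 5} (hres : α₂ ∘ ρ = α')
    {a b : Fin 5} {w : V} {ψ' : (Gd G u v).edgeSet → Fin 5}
    (hstep : ∀ e, (InKempeChain (Gd G u v) α' a b w e → ψ' e = Equiv.swap a b (α' e)) ∧
      (¬ InKempeChain (Gd G u v) α' a b w e → ψ' e = α' e))
    (hiff : ∀ f', InKempeChain G α₂ a b w (ρ f') ↔ InKempeChain (Gd G u v) α' a b w f') :
    (swapAt G α₂ a b w) ∘ ρ = ψ' := by
  funext f'
  by_cases hch : InKempeChain (Gd G u v) α' a b w f'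
  · rw [Function.comp_apply, swapAt_pos ((hiff f').2 hch), (hstep f').1 hch, ← hres]
    rfl
  · rw [Function.comp_apply, swapAt_neg (fun h => hch ((hiff f').1 h)), (hstep f').2 hch,
      ← hres]
    rfl

/-- Core of the lifting lemma, assuming `α eS = a`. -/
private lemma lift_step_core {G : SimpleGraph V} [DecidableRel G.Adj] {u v : V}
    (huv : G.Adj u v) (hdeg : G.degree u + G.degree v ≤ 6)
    {α : G.edgeSet → Fin 5} (hα : IsProperEdgeColoring G 5 α)
    {a b : Fin 5} {w : V} (hab : a ≠ b) (hpa : α ⟨s(u, v), huv⟩ = a)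
    {ψ' : (Gd G u v).edgeSet → Fin 5}
    (hstep : ∀ e, (InKempeChain (Gd G u v) (α ∘ ρ) a b w e →
        ψ' e = Equiv.swap a b ((α ∘ ρ) e)) ∧
      (¬ InKempeChain (Gd G u v) (α ∘ ρ) a b w e → ψ' e = (α ∘ ρ) e)) :
    ∃ β : G.edgeSet → Fin 5, IsProperEdgeColoring G 5 β ∧ (β ∘ ρ) = ψ' ∧
      KempeEquiv G 5 α β := by
  classical
  set eS : G.edgeSet := ⟨s(u, v), huv⟩ with heS
  set Mu := missedF G α eS u with hMu
  set Mv := missedF G α eS v with hMv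
  have hcu : 6 ≤ G.degree u + Mu.card := card_missedF (Sym2.mem_mk_left u v)
  have hcv : 6 ≤ G.degree v + Mv.card := card_missedF (Sym2.mem_mk_right u v)
  have hsum : 6 ≤ Mu.card + Mv.card := by omega
  have ha_mu : a ∈ Mu := by
    rw [hMu, mem_missedF]
    intro f hf hu
    have := hα f eS hf ⟨u, hu, Sym2.mem_mk_left u v⟩
    rwa [hpa] at this
  have ha_mv : a ∈ Mv := by
    rw [hMv, mem_missedF]
    intro f hf hv
    have := hα f eS hf ⟨v, hv, Sym2.mem_mk_right u v⟩
    rwa [hpa] at this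
  by_cases hcom : ∃ c, c ≠ a ∧ c ≠ b ∧ c ∈ Mu ∧ c ∈ Mv
  · -- detach the edge `uv` by recolouring it with `c`, then do the swap directly
    obtain ⟨c, hca, hcb, hcmu, hcmv⟩ := hcom
    rw [hMu, mem_missedF] at hcmu
    rw [hMv, mem_missedF] at hcmv
    have hc : c ≠ α eS := by rw [hpa]; exact hca
    have hchange : KempeChange G 5 α (Function.update α eS c) :=
      kempeChange_update hα hcmu hcmv
    have hprop2 : IsProperEdgeColoring G 5 (Function.update α eS c) :=
      proper_update hα hc hcmu hcmv
    set α₂ := Function.update α eS c with hα₂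
    have hres : α₂ ∘ (ρ (G := G) (u := u) (v := v)) = α ∘ ρ := by
      funext f'
      exact Function.update_of_ne (rho_ne f') _ _
    have hcol2 : ¬(α₂ eS = a ∨ α₂ eS = b) := by
      rw [hα₂]
      rw [Function.update_self]
      rintro (h | h)
      · exact hca h
      · exact hcb h
    refine ⟨swapAt G α₂ a b w, proper_swapAt hprop2, ?_, ?_⟩
    · refine match_of_iff hres hstep ?_
      intro f'
      rw [← hres]
      exact inchain_iff_S0 hcol2 w f'
    · exact (Relation.ReflTransGen.single hchange).tail (kempeChange_swapAt G α₂ a b w)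
  · -- an endpoint of `uv` is isolated in the two-coloured subgraph
    have hqm : b ∈ Mu ∨ b ∈ Mv := by
      by_contra h
      push_neg at h
      obtain ⟨hbu, hbv⟩ := h
      push_neg at hcom
      have hsub : Mu ∩ Mv ⊆ {a} := by
        intro c hc
        rw [Finset.mem_inter] at hc
        rw [Finset.mem_singleton]
        by_contra hcne
        by_cases hcb : c = b
        · exact hbu (hcb ▸ hc.1)
        · exact hcom c hcne hcb hc.1 hc.2
      have h1 : (Mu ∩ Mv).card ≤ 1 :=
        le_trans (Finset.card_le_card hsub) (by simp)
      have h2 := Finset.card_union_add_card_inter Mu Mv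
      have h4 : Mu ∪ Mv ⊆ Finset.univ.erase b := by
        intro c hc
        rw [Finset.mem_erase]
        refine ⟨?_, Finset.mem_univ _⟩
        rintro rfl
        rcases Finset.mem_union.1 hc with h | h
        · exact hbu h
        · exact hbv h
      have h5 : (Mu ∪ Mv).card ≤ 4 := by
        refine le_trans (Finset.card_le_card h4) ?_
        rw [Finset.card_erase_of_mem (Finset.mem_univ b)]
        simp
      omega
    rcases hqm with hbm | hbm
    · -- u is isolated
      have hiso : ∀ f : G.edgeSet, f ≠ eS → u ∈ (f : Sym2 V) → ¬(α f = a ∨ α f = b) := by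
        intro f hf hu
        rw [hMu, mem_missedF] at ha_mu hbm
        rintro (h | h)
        · exact ha_mu f hf hu h
        · exact hbm f hf hu h
      by_cases hw : w = u
      · refine ⟨α, hα, ?_, Relation.ReflTransGen.refl⟩
        funext f'
        subst hw
        exact ((hstep f').2 (S1a hiso f')).symm
      · refine ⟨swapAt G α a b w, proper_swapAt hα, ?_, ?_⟩
        · exact match_of_iff rfl hstep (fun f' => S1b rfl hiso hw f')
        · exact Relation.ReflTransGen.single (kempeChange_swapAt G α a b w)
    · -- v is isolated
      have hiso : ∀ f : G.edgeSet, f ≠ eS → v ∈ (f : Sym2 V) → ¬(α f = a ∨ α f = b) := by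
        intro f hf hv
        rw [hMv, mem_missedF] at ha_mv hbm
        rintro (h | h)
        · exact ha_mv f hf hv h
        · exact hbm f hf hv h
      by_cases hw : w = v
      · refine ⟨α, hα, ?_, Relation.ReflTransGen.refl⟩
        funext f'
        subst hw
        exact ((hstep f').2 (S1a hiso f')).symm
      · refine ⟨swapAt G α a b w, proper_swapAt hα, ?_, ?_⟩
        · exact match_of_iff rfl hstep (fun f' => S1b Sym2.eq_swap hiso hw f')
        · exact Relation.ReflTransGen.single (kempeChange_swapAt G α a b w)

/-- The single-step lifting lemma. -/
lemma lift_step {G : SimpleGraph V} [DecidableRel G.Adj] {u v : V}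
    (huv : G.Adj u v) (hdeg : G.degree u + G.degree v ≤ 6)
    {α : G.edgeSet → Fin 5} (hα : IsProperEdgeColoring G 5 α)
    {ψ' : (Gd G u v).edgeSet → Fin 5}
    (hstep : KempeChange (Gd G u v) 5 (α ∘ ρ) ψ') :
    ∃ β : G.edgeSet → Fin 5, IsProperEdgeColoring G 5 β ∧ (β ∘ ρ) = ψ' ∧
      KempeEquiv G 5 α β := by
  classical
  obtain ⟨a, b, w, hstep⟩ := hstep
  by_cases hab : a = b
  · subst hab
    refine ⟨α, hα, ?_, Relation.ReflTransGen.refl⟩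
    funext f'
    by_cases hch : InKempeChain (Gd G u v) (α ∘ ρ) a a w f'
    · have := (hstep f').1 hch
      rw [Equiv.swap_self] at this
      exact this.symm
    · exact ((hstep f').2 hch).symm
  · by_cases hcol : α ⟨s(u, v), huv⟩ = a ∨ α ⟨s(u, v), huv⟩ = b
    · rcases hcol with hpa | hpb
      · exact lift_step_core huv hdeg hα hab hpa hstep
      · have hstep' : ∀ e, (InKempeChain (Gd G u v) (α ∘ ρ) b a w e →
            ψ' e = Equiv.swap b a ((α ∘ ρ) e)) ∧
            (¬ InKempeChain (Gd G u v) (α ∘ ρ) b a w e → ψ' e = (α ∘ ρ) e) := by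
          intro e
          constructor
          · intro h
            rw [Equiv.swap_comm]
            exact (hstep e).1 (inchain_comm.2 h)
          · intro h
            exact (hstep e).2 (fun h' => h (inchain_comm.1 h'))
        exact lift_step_core huv (by omega) hα (Ne.symm hab) hpb hstep'
    · refine ⟨swapAt G α a b w, proper_swapAt hα, ?_, ?_⟩
      · exact match_of_iff rfl hstep (fun f' => inchain_iff_S0 hcol w f')
      · exact Relation.ReflTransGen.single (kempeChange_swapAt G α a b w)

end Lift
section GraphFacts

variable {V : Type*} [Fintype V] [DecidableEq V]

/-- The special-vertex property. -/
def Special (G : SimpleGraph V) [DecidableRel G.Adj] (z : V) : Prop :=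
  G.degree z ≤ 2 ∨
    (G.degree z = 3 ∧ ((G.neighborFinset z).filter (fun y => G.degree y = 4)).card ≤ 2)

def GdDec {G : SimpleGraph V} [DecidableRel G.Adj] {u v : V} :
    DecidableRel (Gd G u v).Adj := fun _ _ => decidable_of_iff _ Gd_adj.symm

variable {G : SimpleGraph V} [DecidableRel G.Adj] {u v : V}

lemma Gd_nbr_subset (z : V) :
    @SimpleGraph.neighborFinset _ (Gd G u v) z (@SimpleGraph.neighborSetFintype _ _ _ GdDec z)
      ⊆ G.neighborFinset z := by
  intro y hy
  rw [SimpleGraph.mem_neighborFinset] at hy ⊢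
  exact Gd_le hy

lemma Gd_degree_le (z : V) :
    @SimpleGraph.degree _ (Gd G u v) z (@SimpleGraph.neighborSetFintype _ _ _ GdDec z)
      ≤ G.degree z := by
  rw [← SimpleGraph.card_neighborFinset_eq_degree, ← SimpleGraph.card_neighborFinset_eq_degree]
  exact Finset.card_le_card (Gd_nbr_subset z)

lemma Gd_degree_v (huv : G.Adj u v) :
    (@SimpleGraph.degree _ (Gd G u v) v (@SimpleGraph.neighborSetFintype _ _ _ GdDec v)) + 1
      ≤ G.degree v := by
  have hsub : @SimpleGraph.neighborFinset _ (Gd G u v) v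
      (@SimpleGraph.neighborSetFintype _ _ _ GdDec v) ⊆ (G.neighborFinset v).erase u := by
    intro y hy
    rw [SimpleGraph.mem_neighborFinset] at hy
    rw [Finset.mem_erase, SimpleGraph.mem_neighborFinset]
    have h2 := Gd_adj.1 hy
    refine ⟨?_, h2.1⟩
    rintro rfl
    exact h2.2 Sym2.eq_swap
  have hmem : u ∈ G.neighborFinset v := by
    rw [SimpleGraph.mem_neighborFinset]; exact huv.symm
  have h1 : ((G.neighborFinset v).erase u).card = (G.neighborFinset v).card - 1 :=
    Finset.card_erase_of_mem hmem
  have h2 : 1 ≤ (G.neighborFinset v).card := Finset.card_pos.2 ⟨u, hmem⟩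
  have h3 := Finset.card_le_card hsub
  rw [← SimpleGraph.card_neighborFinset_eq_degree, ← SimpleGraph.card_neighborFinset_eq_degree]
  omega

lemma Gd_degree_u (huv : G.Adj u v) :
    (@SimpleGraph.degree _ (Gd G u v) u (@SimpleGraph.neighborSetFintype _ _ _ GdDec u)) + 1
      ≤ G.degree u := by
  have hsub : @SimpleGraph.neighborFinset _ (Gd G u v) u
      (@SimpleGraph.neighborSetFintype _ _ _ GdDec u) ⊆ (G.neighborFinset u).erase v := by
    intro y hy
    rw [SimpleGraph.mem_neighborFinset] at hy
    rw [Finset.mem_erase, SimpleGraph.mem_neighborFinset]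
    have h2 := Gd_adj.1 hy
    refine ⟨?_, h2.1⟩
    rintro rfl
    exact h2.2 rfl
  have hmem : v ∈ G.neighborFinset u := by
    rw [SimpleGraph.mem_neighborFinset]; exact huv
  have h1 : ((G.neighborFinset u).erase v).card = (G.neighborFinset u).card - 1 :=
    Finset.card_erase_of_mem hmem
  have h2 : 1 ≤ (G.neighborFinset u).card := Finset.card_pos.2 ⟨v, hmem⟩
  have h3 := Finset.card_le_card hsub
  rw [← SimpleGraph.card_neighborFinset_eq_degree, ← SimpleGraph.card_neighborFinset_eq_degree]
  omega

lemma special_mono (hΔ : ∀ z, G.degree z ≤ 4) {z : V} (hz : Special G z) :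
    @Special _ _ (Gd G u v) GdDec z := by
  letI := (GdDec : DecidableRel (Gd G u v).Adj)
  rcases hz with h2 | ⟨h3, hfil⟩
  · exact Or.inl (le_trans (Gd_degree_le z) h2)
  · by_cases hd : (Gd G u v).degree z ≤ 2
    · exact Or.inl hd
    · right
      have hle := Gd_degree_le (G := G) (u := u) (v := v) z
      refine ⟨by omega, ?_⟩
      refine le_trans (Finset.card_le_card ?_) hfil
      intro y hy
      rw [Finset.mem_filter] at hy ⊢
      have hmem := Gd_nbr_subset (G := G) (u := u) (v := v) z hy.1
      refine ⟨hmem, ?_⟩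
      have hley := Gd_degree_le (G := G) (u := u) (v := v) y
      have := hΔ y
      have := hy.2
      omega

lemma special_Gd_u (huv : G.Adj u v) (hΔ : ∀ z, G.degree z ≤ 4)
    (h44 : ∀ p q, G.Adj p q → ¬(G.degree p = 4 ∧ G.degree q = 4)) :
    @Special _ _ (Gd G u v) GdDec u := by
  letI := (GdDec : DecidableRel (Gd G u v).Adj)
  have hd := Gd_degree_u huv
  by_cases hdu : G.degree u ≤ 3
  · exact Or.inl (by omega)
  · have hu4 : G.degree u = 4 := by have := hΔ u; omega
    by_cases hd2 : (Gd G u v).degree u ≤ 2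
    · exact Or.inl hd2
    · right
      refine ⟨by omega, ?_⟩
      have hempty : ((Gd G u v).neighborFinset u).filter
          (fun y => (Gd G u v).degree y = 4) = ∅ := by
        apply Finset.eq_empty_of_forall_notMem
        intro y hy
        rw [Finset.mem_filter] at hy
        have hadj : G.Adj u y := by
          have := Gd_nbr_subset (G := G) (u := u) (v := v) u hy.1
          rwa [SimpleGraph.mem_neighborFinset] at this
        have hley := Gd_degree_le (G := G) (u := u) (v := v) y
        have h4y : G.degree y = 4 := by have := hΔ y; have := hy.2; omega
        exact h44 u y hadj ⟨hu4, h4y⟩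
      rw [hempty]
      simp

lemma special_Gd_v (huv : G.Adj u v) (hv3 : G.degree v ≤ 3) :
    @Special _ _ (Gd G u v) GdDec v := by
  have hd := Gd_degree_v huv
  exact Or.inl (by omega)

end GraphFacts
section Main

open Finset

variable {V : Type*} [Fintype V] [DecidableEq V]

lemma aux_kempe : ∀ (n : ℕ) (G : SimpleGraph V) [inst : DecidableRel G.Adj],
    G.edgeFinset.card ≤ n →
    (∀ z, G.degree z ≤ 4) →
    (∀ p q, G.Adj p q → ¬(G.degree p = 4 ∧ G.degree q = 4)) →
    (∀ x, ∃ z, G.Reachable x z ∧ Special G z) →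
    ∀ φ ψ : G.edgeSet → Fin 5, IsProperEdgeColoring G 5 φ → IsProperEdgeColoring G 5 ψ →
      KempeEquiv G 5 φ ψ := by
  intro n
  induction n with
  | zero =>
      intro G inst hn hΔ h44 hspec φ ψ hφ hψ
      have hempty : ∀ f : G.edgeSet, False := by
        intro f
        have h1 := SimpleGraph.mem_edgeFinset.2 f.2
        have h0 : G.edgeFinset = ∅ := Finset.card_eq_zero.1 (Nat.le_zero.1 hn)
        rw [h0] at h1
        exact absurd h1 (Finset.notMem_empty _)
      have heq : φ = ψ := funext fun f => (hempty f).elim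
      rw [heq]
      exact Relation.ReflTransGen.refl
  | succ n ih =>
      intro G inst hn hΔ h44 hspec φ ψ hφ hψ
      by_cases hle : G.edgeFinset.card ≤ n
      · exact ih G hle hΔ h44 hspec φ ψ hφ hψ
      have hpos : 0 < G.edgeFinset.card := by omega
      obtain ⟨e0, he0⟩ := Finset.card_pos.1 hpos
      rw [SimpleGraph.mem_edgeFinset] at he0
      have hx0 : ∃ p q, G.Adj p q := by
        revert he0
        induction e0 using Sym2.ind with
        | _ p q => exact fun h => ⟨p, q, h⟩
      obtain ⟨x0, y0, hxy0⟩ := hx0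
      obtain ⟨v, hreach, hvsp⟩ := hspec x0
      have hdegv : 0 < G.degree v := by
        obtain ⟨W⟩ := hreach.symm
        cases W with
        | nil => exact (SimpleGraph.degree_pos_iff_exists_adj G _).2 ⟨y0, hxy0⟩
        | cons h p => exact (SimpleGraph.degree_pos_iff_exists_adj G _).2 ⟨_, h⟩
      have hv3 : G.degree v ≤ 3 := by rcases hvsp with h | ⟨h, _⟩ <;> omega
      obtain ⟨u, huv, hdu⟩ : ∃ u, G.Adj u v ∧ G.degree u + G.degree v ≤ 6 := by
        rcases hvsp with h2 | ⟨h3, hfil⟩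
        · obtain ⟨y, hy⟩ := (SimpleGraph.degree_pos_iff_exists_adj G _).1 hdegv
          exact ⟨y, hy.symm, by have := hΔ y; omega⟩
        · by_cases hall : ∀ y ∈ G.neighborFinset v, G.degree y = 4
          · exfalso
            have heqf : (G.neighborFinset v).filter (fun y => G.degree y = 4)
                = G.neighborFinset v := Finset.filter_eq_self.2 hall
            rw [heqf, SimpleGraph.card_neighborFinset_eq_degree] at hfil
            omega
          · push_neg at hall
            obtain ⟨y, hymem, hy4⟩ := hall
            rw [SimpleGraph.mem_neighborFinset] at hymem
            refine ⟨y, hymem.symm, ?_⟩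
            have := hΔ y
            omega
      letI instd : DecidableRel (Gd G u v).Adj := GdDec
      have hcard' : (Gd G u v).edgeFinset.card ≤ n := by
        have hsub : (Gd G u v).edgeFinset ⊆ G.edgeFinset.erase s(u, v) := by
          intro f hf
          rw [SimpleGraph.mem_edgeFinset] at hf
          simp only [Gd, SimpleGraph.edgeSet_deleteEdges, Set.mem_diff,
            Set.mem_singleton_iff] at hf
          rw [Finset.mem_erase]
          exact ⟨hf.2, SimpleGraph.mem_edgeFinset.2 hf.1⟩
        have hmem : s(u, v) ∈ G.edgeFinset := SimpleGraph.mem_edgeFinset.2 huv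
        have hc := Finset.card_le_card hsub
        rw [Finset.card_erase_of_mem hmem] at hc
        omega
      have hΔ' : ∀ z, (Gd G u v).degree z ≤ 4 := fun z => le_trans (Gd_degree_le z) (hΔ z)
      have h44' : ∀ p q, (Gd G u v).Adj p q →
          ¬((Gd G u v).degree p = 4 ∧ (Gd G u v).degree q = 4) := by
        rintro p q hadj ⟨hp, hq⟩
        have h1 := Gd_degree_le (G := G) (u := u) (v := v) p
        have h2 := Gd_degree_le (G := G) (u := u) (v := v) q
        exact h44 p q (Gd_le hadj)
          ⟨by have := hΔ p; omega, by have := hΔ q; omega⟩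
      have hspec' : ∀ x, ∃ z, (Gd G u v).Reachable x z ∧ Special (Gd G u v) z := by
        intro x
        obtain ⟨z, hxz, hz⟩ := hspec x
        have hstepg : ∀ p q, G.Adj p q → (Gd G u v).Adj p q ∨ s(p, q) = s(u, v) := by
          intro p q h
          by_cases hs : s(p, q) = s(u, v)
          · exact Or.inr hs
          · exact Or.inl (Gd_adj.2 ⟨h, hs⟩)
        rcases reach_add hstepg hxz with h1 | ⟨h2, _⟩ | ⟨h2, _⟩
        · exact ⟨z, h1, special_mono hΔ hz⟩
        · exact ⟨u, h2, special_Gd_u huv hΔ h44⟩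
        · exact ⟨v, h2, special_Gd_v huv hv3⟩
      have hK' := ih (Gd G u v) hcard' hΔ' h44' hspec' (φ ∘ ρ) (ψ ∘ ρ)
        (proper_restrict hφ) (proper_restrict hψ)
      have hlift : ∀ δ' : (Gd G u v).edgeSet → Fin 5,
          Relation.ReflTransGen (KempeChange (Gd G u v) 5) (φ ∘ ρ) δ' →
          ∃ χ : G.edgeSet → Fin 5, IsProperEdgeColoring G 5 χ ∧ χ ∘ ρ = δ' ∧
            KempeEquiv G 5 φ χ := by
        intro δ' h
        induction h with
        | refl => exact ⟨φ, hφ, rfl, Relation.ReflTransGen.refl⟩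
        | tail h1 hstep ih2 =>
            obtain ⟨χ₁, hp1, hr1, he1⟩ := ih2
            rw [← hr1] at hstep
            obtain ⟨β, hpβ, hrβ, heβ⟩ := lift_step huv hdu hp1 hstep
            exact ⟨β, hpβ, hrβ, he1.trans heβ⟩
      obtain ⟨χ, hpχ, hrχ, heχ⟩ := hlift _ hK'
      have hagree : ∀ f : G.edgeSet, f ≠ (⟨s(u, v), huv⟩ : G.edgeSet) → χ f = ψ f := by
        intro f hf
        have hfval : (f : Sym2 V) ≠ s(u, v) := fun h => hf (Subtype.ext h)
        have hfmem : (f : Sym2 V) ∈ (Gd G u v).edgeSet := by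
          simp only [Gd, SimpleGraph.edgeSet_deleteEdges, Set.mem_diff,
            Set.mem_singleton_iff]
          exact ⟨f.2, hfval⟩
        have hrf : ρ (⟨(f : Sym2 V), hfmem⟩ : (Gd G u v).edgeSet) = f := Subtype.ext rfl
        calc χ f = (χ ∘ ρ) ⟨(f : Sym2 V), hfmem⟩ := by rw [Function.comp_apply, hrf]
          _ = (ψ ∘ ρ) ⟨(f : Sym2 V), hfmem⟩ := by rw [hrχ]
          _ = ψ f := by rw [Function.comp_apply, hrf]
      by_cases hfin : χ ⟨s(u, v), huv⟩ = ψ ⟨s(u, v), huv⟩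
      · have heq : χ = ψ := funext fun f => by
          by_cases hf : f = (⟨s(u, v), huv⟩ : G.edgeSet)
          · rw [hf]; exact hfin
          · exact hagree f hf
        rw [← heq]
        exact heχ
      · have hmu : ∀ f : G.edgeSet, f ≠ (⟨s(u, v), huv⟩ : G.edgeSet) →
            u ∈ (f : Sym2 V) → χ f ≠ ψ ⟨s(u, v), huv⟩ := by
          intro f hf hu
          rw [hagree f hf]
          exact hψ f _ hf ⟨u, hu, Sym2.mem_mk_left u v⟩
        have hmv : ∀ f : G.edgeSet, f ≠ (⟨s(u, v), huv⟩ : G.edgeSet) →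
            v ∈ (f : Sym2 V) → χ f ≠ ψ ⟨s(u, v), huv⟩ := by
          intro f hf hv'
          rw [hagree f hf]
          exact hψ f _ hf ⟨v, hv', Sym2.mem_mk_right u v⟩
        have hch := kempeChange_update (hpq := huv) hpχ hmu hmv
        have hupd : Function.update χ (⟨s(u, v), huv⟩ : G.edgeSet) (ψ ⟨s(u, v), huv⟩) = ψ :=
          funext fun f => by
            by_cases hf : f = (⟨s(u, v), huv⟩ : G.edgeSet)
            · rw [hf, Function.update_self]
            · rw [Function.update_of_ne hf, hagree f hf]
        rw [hupd] at hch
        exact heχ.tail hch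

end Main
/-- **Lemma (non-regular subquartic).** Let `G` be a connected simple graph with maximum
degree at most 4 in which no two vertices of degree four are adjacent. If `G` has a
vertex `v` with either (a) `deg(v) ≤ 2`, or (b) `deg(v) = 3` and `v` has at most two
neighbours of degree four, then all proper 5-edge-colourings of `G` are Kempe
equivalent, i.e. `κ_E(G, 5) = 1`. -/
theorem kempe_equiv_five_of_subquartic_nonregular {V : Type*} [Fintype V]
    [DecidableEq V] (G : SimpleGraph V) [DecidableRel G.Adj] (hconn : G.Connected)
    (hΔ : ∀ u : V, G.degree u ≤ 4)
    (h44 : ∀ u w : V, G.Adj u w → ¬(G.degree u = 4 ∧ G.degree w = 4))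
    (v : V)
    (hv : G.degree v ≤ 2 ∨
      (G.degree v = 3 ∧
        ((G.neighborFinset v).filter (fun u => G.degree u = 4)).card ≤ 2))
    (φ ψ : G.edgeSet → Fin 5)
    (hφ : IsProperEdgeColoring G 5 φ) (hψ : IsProperEdgeColoring G 5 ψ) :
    KempeEquiv G 5 φ ψ := by
  have hspec : ∀ x, ∃ z, G.Reachable x z ∧ Special G z := fun x =>
    ⟨v, hconn.preconnected x v, hv⟩
  exact aux_kempe G.edgeFinset.card G le_rfl hΔ h44 hspec φ ψ hφ hψ
end
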